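/- arXiv:2012.15142 — 4 statements merged into one kernel-verified Lean document; each statement's English description precedes it below -/
import Mathlib

section
/- Let F be a shifted family of k-subsets of {1,...,n} with matching number at most s and clique number q = sk + k - l, where l < s/(3k) and (s+1)k ≤ n ≤ (s+1)k + s/(3k) - l. Then every F ∈ F satisfies |F ∩ {q+1,...,n}| ≤ min{k, l} - 1. -/
open Finset

/-- Coordinatewise (shifting) partial order on finite sets of naturals:
`A ≼ B` iff the increasing enumerations satisfy `aₗ ≤ bₗ` for all `l`. -/
def shiftLE (A B : Finset ℕ) : Prop :=
  List.Forall₂ (· ≤ ·) (A.sort (· ≤ ·)) (B.sort (· ≤ ·))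

/-- A family on the ground set `{1,…,n}` is shifted. -/
def IsShifted (n : ℕ) (F : Finset (Finset ℕ)) : Prop :=
  ∀ B ∈ F, ∀ A ⊆ Finset.Icc 1 n, shiftLE A B → A ∈ F

/-- The matching number of `F` is at most `s`. -/
def MatchingLE (F : Finset (Finset ℕ)) (s : ℕ) : Prop :=
  ∀ M ⊆ F, (M : Set (Finset ℕ)).PairwiseDisjoint id → M.card ≤ s

/-- `F` contains `s` pairwise disjoint members. -/
def HasMatching (F : Finset (Finset ℕ)) (s : ℕ) : Prop :=
  ∃ M ⊆ F, (M : Set (Finset ℕ)).PairwiseDisjoint id ∧ M.card = s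

/-- The clique number of `F` (as a `k`-graph on `{1,…,n}`) is at least `q`. -/
def HasClique (n : ℕ) (F : Finset (Finset ℕ)) (k q : ℕ) : Prop :=
  ∃ Q ⊆ Finset.Icc 1 n, Q.card = q ∧ Q.powersetCard k ⊆ F

-- gap lemma for sorted lists
lemma get_mono_gap {L : List ℕ} (hL : L.Pairwise (· < ·)) :
    ∀ d i (h : i + d < L.length), L.get ⟨i, by omega⟩ + d ≤ L.get ⟨i + d, h⟩ := by
  intro d
  induction d with
  | zero => intro i h; simp
  | succ d ih =>
    intro i h
    have h1 : i + d < L.length := by omega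
    have h2 := ih i h1
    have h3 : L.get ⟨i + d, h1⟩ < L.get ⟨i + (d + 1), h⟩ :=
      hL.sortedLT.strictMono_get (by simp [Fin.lt_def])
    omega

lemma get_ge {L : List ℕ} (hL : L.Pairwise (· < ·)) {c : ℕ} (hc : ∀ x ∈ L, c ≤ x)
    {i : ℕ} (h : i < L.length) : c + i ≤ L.get ⟨i, h⟩ := by
  have h0 : (0:ℕ) + i < L.length := by omega
  have h1 := get_mono_gap hL i 0 h0
  have he : (⟨0 + i, h0⟩ : Fin L.length) = ⟨i, h⟩ := Fin.ext (by simp)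
  rw [he] at h1
  have hm : c ≤ L.get ⟨0, by omega⟩ := hc _ (L.get_mem ⟨0, by omega⟩)
  omega

lemma get_le {L : List ℕ} (hL : L.Pairwise (· < ·)) {c : ℕ} (hc : ∀ x ∈ L, x ≤ c)
    {i : ℕ} (h : i < L.length) : L.get ⟨i, h⟩ + (L.length - 1 - i) ≤ c := by
  have h0 : i + (L.length - 1 - i) < L.length := by omega
  have := get_mono_gap hL (L.length - 1 - i) i h0
  have hm : L.get ⟨i + (L.length - 1 - i), h0⟩ ≤ c := hc _ (L.get_mem ⟨_, h0⟩)
  omega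

lemma shiftLE_of_get {A B : Finset ℕ} (hcard : A.card = B.card)
    (h : ∀ i (hA : i < (A.sort (· ≤ ·)).length) (hB : i < (B.sort (· ≤ ·)).length),
      (A.sort (· ≤ ·)).get ⟨i, hA⟩ ≤ (B.sort (· ≤ ·)).get ⟨i, hB⟩) : shiftLE A B := by
  rw [shiftLE, List.forall₂_iff_get]
  exact ⟨by simp [Finset.length_sort, hcard], h⟩

lemma sort_image {S : Finset ℕ} {f : ℕ → ℕ}
    (hf : ∀ a ∈ S, ∀ b ∈ S, a < b → f a < f b) :
    (S.image f).sort (· ≤ ·) = (S.sort (· ≤ ·)).map f := by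
  haveI : IsAntisymm ℕ (· < ·) := ⟨fun a b h h' => absurd h' (lt_asymm h)⟩
  have hinj : Set.InjOn f ↑S := by
    intro a ha b hb hab
    by_contra hne
    rcases lt_or_gt_of_ne hne with h | h
    · exact absurd hab (ne_of_lt (hf a ha b hb h))
    · exact absurd hab.symm (ne_of_lt (hf b hb a ha h))
  apply (fun h1 h2 => List.Perm.eq_of_pairwise' (r := (· < ·)) (Finset.sortedLT_sort _).pairwise h2 h1) ?_ ?_
  · rw [← Multiset.coe_eq_coe]
    calc ((S.image f).sort (· ≤ ·) : Multiset ℕ) = (S.image f).val := Finset.sort_eq _ _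
    _ = Multiset.map f S.val := Finset.image_val_of_injOn hinj
    _ = Multiset.map f ↑(S.sort (· ≤ ·)) := by rw [Finset.sort_eq]
    _ = ↑((S.sort (· ≤ ·)).map f) := rfl
  · rw [List.pairwise_map]
    exact (Finset.sortedLT_sort S).pairwise.imp_of_mem
      (fun ha hb h => hf _ ((Finset.mem_sort _).1 ha) _ ((Finset.mem_sort _).1 hb) h)

lemma shiftLE_image {S : Finset ℕ} {f : ℕ → ℕ}
    (hf : ∀ a ∈ S, ∀ b ∈ S, a < b → f a < f b) (hle : ∀ a ∈ S, a ≤ f a) :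
    shiftLE S (S.image f) := by
  rw [shiftLE, sort_image hf, List.forall₂_map_right_iff]
  rw [List.forall₂_same]
  exact fun x hx => hle x ((Finset.mem_sort _).1 hx)

-- all k-subsets of [1,q] are in F
lemma clique_mem {n k q : ℕ} {F : Finset (Finset ℕ)} (hshift : IsShifted n F) (hqn : q ≤ n)
    (hclq : HasClique n F k q) : ∀ S ⊆ Finset.Icc 1 q, S.card = k → S ∈ F := by
  obtain ⟨Q, hQsub, hQcard, hQF⟩ := hclq
  intro S hS hScard
  set LQ := Q.sort (· ≤ ·) with hLQ
  have hlen : LQ.length = q := by rw [hLQ, Finset.length_sort, hQcard]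
  have hsorted : LQ.Pairwise (· < ·) := (Finset.sortedLT_sort Q).pairwise
  have hone : ∀ x ∈ LQ, 1 ≤ x := by
    intro x hx
    have := hQsub ((Finset.mem_sort _).1 hx)
    exact (Finset.mem_Icc.1 this).1
  set f : ℕ → ℕ := fun j => LQ.getD (j - 1) 0 with hfdef
  have hidx : ∀ j ∈ Finset.Icc 1 q, j - 1 < LQ.length := by
    intro j hj; have := Finset.mem_Icc.1 hj; omega
  have hfeq : ∀ j (hj : j ∈ Finset.Icc 1 q), f j = LQ.get ⟨j - 1, hidx j hj⟩ := by
    intro j hj; exact List.getD_eq_get (i := ⟨j - 1, hidx j hj⟩) ..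
  have hfmem : ∀ j ∈ Finset.Icc 1 q, f j ∈ Q := by
    intro j hj; rw [hfeq j hj]
    exact (Finset.mem_sort _).1 (LQ.get_mem ⟨_, hidx j hj⟩)
  have hfge : ∀ j ∈ Finset.Icc 1 q, j ≤ f j := by
    intro j hj
    rw [hfeq j hj]
    have := get_ge hsorted hone (hidx j hj)
    have := Finset.mem_Icc.1 hj
    omega
  have hfmono : ∀ a ∈ Finset.Icc 1 q, ∀ b ∈ Finset.Icc 1 q, a < b → f a < f b := by
    intro a ha b hb hab
    rw [hfeq a ha, hfeq b hb]
    apply hsorted.sortedLT.strictMono_get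
    have h1 := Finset.mem_Icc.1 ha
    exact Fin.mk_lt_mk.mpr (by omega)
  have hBF : S.image f ∈ F := by
    apply hQF
    rw [Finset.mem_powersetCard]
    constructor
    · intro x hx
      obtain ⟨a, ha, rfl⟩ := Finset.mem_image.1 hx
      exact hfmem a (hS ha)
    · rw [Finset.card_image_of_injOn, hScard]
      intro a ha b hb hab
      by_contra hne
      rcases lt_or_gt_of_ne hne with h | h
      · exact absurd hab (ne_of_lt (hfmono a (hS ha) b (hS hb) h))
      · exact absurd hab.symm (ne_of_lt (hfmono b (hS hb) a (hS ha) h))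
  refine hshift _ hBF S (fun x hx => ?_) ?_
  · have := Finset.mem_Icc.1 (hS hx); rw [Finset.mem_Icc]; omega
  · exact shiftLE_image (fun a ha b hb h => hfmono a (hS ha) b (hS hb) h)
      (fun a ha => hfge a (hS ha))

-- existence of many disjoint k-subsets
lemma exists_disjoint_family {k : ℕ} (hk : 1 ≤ k) :
    ∀ (s : ℕ) (C : Finset ℕ), s * k ≤ C.card →
    ∃ M : Finset (Finset ℕ), M.card = s ∧ (M : Set (Finset ℕ)).PairwiseDisjoint id ∧
      ∀ X ∈ M, X ⊆ C ∧ X.card = k := by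
  intro s
  induction s with
  | zero => exact fun C _ => ⟨∅, by simp, by simp, by simp⟩
  | succ s ih =>
    intro C hC
    obtain ⟨X, hXC, hXcard⟩ := Finset.exists_subset_card_eq
      (show k ≤ C.card by nlinarith)
    obtain ⟨M, hMcard, hMdisj, hMsub⟩ := ih (C \ X)
      (by
        have := Finset.card_sdiff_of_subset hXC
        rw [this, hXcard]
        have : s * k + k ≤ C.card := by nlinarith
        omega)
    have hXnot : X ∉ M := by
      intro hX
      have hne : X.Nonempty := Finset.card_pos.1 (by omega)
      obtain ⟨x, hx⟩ := hne
      have := (hMsub X hX).1 hx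
      exact (Finset.mem_sdiff.1 this).2 hx
    refine ⟨insert X M, ?_, ?_, ?_⟩
    · rw [Finset.card_insert_of_notMem hXnot, hMcard]
    · rw [Finset.coe_insert]
      apply hMdisj.insert
      intro Y hY _
      simp only [id]
      rw [Finset.disjoint_left]
      intro a haX haY
      exact (Finset.mem_sdiff.1 ((hMsub Y hY).1 haY)).2 haX
    · intro Y hY
      rcases Finset.mem_insert.1 hY with rfl | hY
      · exact ⟨hXC, hXcard⟩
      · exact ⟨(hMsub Y hY).1.trans (Finset.sdiff_subset), (hMsub Y hY).2⟩

theorem stmt_11 (n k s l q : ℕ) (hk : 1 ≤ k) (hs : 1 ≤ s)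
    (hq : q = s * k + k - l)
    (hl : 3 * k * l < s)
    (hn1 : (s + 1) * k ≤ n) (hn2 : 3 * k * (n + l) ≤ 3 * k * ((s + 1) * k) + s)
    (F : Finset (Finset ℕ)) (hF : F ⊆ (Finset.Icc 1 n).powersetCard k)
    (hshift : IsShifted n F) (hmatch : MatchingLE F s)
    (hclq : HasClique n F k q) (hclq' : ¬ HasClique n F k (q + 1)) :
    ∀ A ∈ F, (A ∩ Finset.Icc (q + 1) n).card ≤ min k l - 1 := by
  intro A hA
  obtain ⟨hAsub, hAcard⟩ := Finset.mem_powersetCard.1 (hF hA)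
  set t := (A ∩ Finset.Icc (q + 1) n).card with ht
  by_contra hcon
  push_neg at hcon
  -- arithmetic facts
  have hls : l < s := lt_of_le_of_lt (by nlinarith) hl
  have hlsk : l < s * k := lt_of_lt_of_le hls (Nat.le_mul_of_pos_right s hk)
  have hsk1 : (s + 1) * k = s * k + k := by ring
  have hqk : k + 1 ≤ q := by omega
  have hqn : q ≤ n := by omega
  -- splitting A
  have hunion : (A ∩ Finset.Icc 1 q) ∪ (A ∩ Finset.Icc (q + 1) n) = A := by
    ext x
    simp only [Finset.mem_union, Finset.mem_inter, Finset.mem_Icc]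
    constructor
    · rintro (⟨h, _⟩ | ⟨h, _⟩) <;> exact h
    · intro hx
      have hxn := Finset.mem_Icc.1 (hAsub hx)
      rcases le_or_gt x q with h | h
      · exact Or.inl ⟨hx, hxn.1, h⟩
      · exact Or.inr ⟨hx, h, hxn.2⟩
  have hdisj2 : Disjoint (A ∩ Finset.Icc 1 q) (A ∩ Finset.Icc (q + 1) n) := by
    rw [Finset.disjoint_left]
    intro x h1 h2
    simp only [Finset.mem_inter, Finset.mem_Icc] at h1 h2
    omega
  have hsplit : (A ∩ Finset.Icc 1 q).card + t = k := by
    rw [ht, ← Finset.card_union_of_disjoint hdisj2, hunion, hAcard]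
  have htk : t ≤ k := by omega
  rcases le_or_gt l k with hlk | hlk
  · -- case l ≤ k : matching contradiction
    rw [min_eq_right hlk] at hcon
    have htge : l ≤ t := by omega
    have hCcard : s * k ≤ (Finset.Icc 1 q \ A).card := by
      have h1 : (Finset.Icc 1 q \ A).card + (Finset.Icc 1 q ∩ A).card
          = (Finset.Icc 1 q).card := Finset.card_sdiff_add_card_inter _ _
      rw [Finset.inter_comm] at h1
      have h2 : (Finset.Icc 1 q).card = q := by rw [Nat.card_Icc]; omega
      omega
    obtain ⟨M, hMcard, hMdisj, hMsub⟩ := exists_disjoint_family hk s _ hCcard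
    have hMF : ∀ X ∈ M, X ∈ F := fun X hX =>
      clique_mem hshift hqn hclq X ((hMsub X hX).1.trans Finset.sdiff_subset) (hMsub X hX).2
    have hAnot : A ∉ M := by
      intro h
      obtain ⟨x, hx⟩ := Finset.card_pos.1 (show 0 < A.card by omega)
      exact (Finset.mem_sdiff.1 ((hMsub A h).1 hx)).2 hx
    have hcards : (insert A M).card = s + 1 := by
      rw [Finset.card_insert_of_notMem hAnot, hMcard]
    have hsubF : insert A M ⊆ F := by
      intro X hX
      rcases Finset.mem_insert.1 hX with rfl | h
      · exact hA
      · exact hMF X h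
    have hpd : ((insert A M : Finset (Finset ℕ)) : Set (Finset ℕ)).PairwiseDisjoint id := by
      rw [Finset.coe_insert]
      apply hMdisj.insert
      intro Y hY _
      simp only [id]
      rw [Finset.disjoint_left]
      intro a haA haY
      exact (Finset.mem_sdiff.1 ((hMsub Y hY).1 haY)).2 haA
    have := hmatch _ hsubF hpd
    omega
  · -- case k < l : clique contradiction
    rw [min_eq_left hlk.le] at hcon
    have htk' : t = k := by omega
    have hAeq : A ∩ Finset.Icc (q + 1) n = A :=
      Finset.eq_of_subset_of_card_le Finset.inter_subset_left (by omega)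
    have hAsub' : A ⊆ Finset.Icc (q + 1) n := Finset.inter_eq_left.1 hAeq
    have hq1n : q + 1 ≤ n := by
      obtain ⟨x, hx⟩ := Finset.card_pos.1 (show 0 < A.card by omega)
      have := Finset.mem_Icc.1 (hAsub' hx)
      omega
    set T := Finset.Icc (q + 2 - k) (q + 1) with hT
    have hTcard : T.card = k := by rw [hT, Nat.card_Icc]; omega
    have hTsub : T ⊆ Finset.Icc 1 n := by
      intro x hx
      have := Finset.mem_Icc.1 hx
      rw [Finset.mem_Icc]
      omega
    have hTA : shiftLE T A := by
      apply shiftLE_of_get (by rw [hTcard, hAcard])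
      intro i hTi hAi
      have hlenT : (T.sort (· ≤ ·)).length = k := by rw [Finset.length_sort, hTcard]
      have h1 := get_le (Finset.sortedLT_sort T).pairwise
        (fun x hx => (Finset.mem_Icc.1 ((Finset.mem_sort _).1 hx)).2) hTi
      have h2 := get_ge (Finset.sortedLT_sort A).pairwise
        (fun x hx => (Finset.mem_Icc.1 (hAsub' ((Finset.mem_sort _).1 hx))).1) hAi
      omega
    have hTF : T ∈ F := hshift A hA T hTsub hTA
    apply hclq'
    refine ⟨Finset.Icc 1 (q + 1), ?_, ?_, ?_⟩
    · intro x hx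
      have := Finset.mem_Icc.1 hx
      rw [Finset.mem_Icc]
      omega
    · rw [Nat.card_Icc]; omega
    · intro S hS
      obtain ⟨hSsub, hScard⟩ := Finset.mem_powersetCard.1 hS
      refine hshift T hTF S (fun x hx => ?_) ?_
      · have := Finset.mem_Icc.1 (hSsub hx)
        rw [Finset.mem_Icc]
        omega
      · apply shiftLE_of_get (by rw [hScard, hTcard])
        intro i hSi hTi
        have hlenS : (S.sort (· ≤ ·)).length = k := by rw [Finset.length_sort, hScard]
        have h1 := get_le (Finset.sortedLT_sort S).pairwise
          (fun x hx => (Finset.mem_Icc.1 (hSsub ((Finset.mem_sort _).1 hx))).2) hSi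
        have h2 := get_ge (Finset.sortedLT_sort T).pairwise
          (fun x hx => (Finset.mem_Icc.1 ((Finset.mem_sort _).1 hx)).1) hTi
        omega
end

section
/- Let j+2 ≤ n, and consider families A_0 ⊆ binom({j+2,...,n}, k-1) and B_0 ⊆ binom({j+2,...,n}, l-j) that are cross-intersecting, with (k-1) + (l-j) ≤ n - j - 1. Then for any β > 0, |A_0| + β|B_0| ≤ max{ C(n-j-1, k-1), β·C(n-j-1, l-j) }. -/
open Finset

/-- Key counting lemma: cross-intersecting families on a ground set `S` with
`a + b ≤ |S|` satisfy `|A0|·C(|S|,b) + |B0|·C(|S|,a) ≤ C(|S|,a)·C(|S|,b)`. -/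
lemma cross_int_count (S : Finset ℕ) (a b : ℕ) (hab : a + b ≤ S.card)
    (A0 B0 : Finset (Finset ℕ))
    (hA0 : A0 ⊆ S.powersetCard a) (hB0 : B0 ⊆ S.powersetCard b)
    (hcross : ∀ A ∈ A0, ∀ B ∈ B0, (A ∩ B).Nonempty) :
    A0.card * S.card.choose b + B0.card * S.card.choose a ≤
      S.card.choose a * S.card.choose b := by
  set m := S.card with hm
  set T := S.powersetCard b \ B0 with hT
  -- Step 1: for A ∈ A0, the b-sets in T disjoint from A are exactly b-subsets of S \ A
  have step1 : ∀ A ∈ A0, T.filter (fun B => Disjoint A B) = (S \ A).powersetCard b := by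
    intro A hA
    have hAmem := Finset.mem_powersetCard.1 (hA0 hA)
    ext B
    simp only [Finset.mem_filter, hT, Finset.mem_sdiff, Finset.mem_powersetCard]
    constructor
    · rintro ⟨⟨⟨hBS, hBcard⟩, _⟩, hdisj⟩
      refine ⟨fun x hx => Finset.mem_sdiff.2 ⟨hBS hx, ?_⟩, hBcard⟩
      intro hxA
      exact (Finset.disjoint_left.1 hdisj hxA) hx
    · rintro ⟨hBSA, hBcard⟩
      have hBS : B ⊆ S := hBSA.trans (Finset.sdiff_subset)
      have hdisj : Disjoint A B := by
        rw [Finset.disjoint_right]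
        intro x hxB hxA
        exact (Finset.mem_sdiff.1 (hBSA hxB)).2 hxA
      refine ⟨⟨⟨hBS, hBcard⟩, ?_⟩, hdisj⟩
      intro hBB0
      obtain ⟨x, hx⟩ := hcross A hA B hBB0
      rw [Finset.mem_inter] at hx
      exact (Finset.disjoint_left.1 hdisj hx.1) hx.2
  -- double counting
  have count1 : A0.card * (m - a).choose b =
      ∑ A ∈ A0, (T.filter (fun B => Disjoint A B)).card := by
    rw [Finset.sum_congr rfl (fun A hA => by
      rw [step1 A hA, Finset.card_powersetCard, Finset.card_sdiff_of_subset
        (Finset.mem_powersetCard.1 (hA0 hA)).1,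
        (Finset.mem_powersetCard.1 (hA0 hA)).2])]
    simp [Finset.sum_const, mul_comm, hm]
  have swap : ∑ A ∈ A0, (T.filter (fun B => Disjoint A B)).card =
      ∑ B ∈ T, (A0.filter (fun A => Disjoint A B)).card := by
    simp only [Finset.card_filter]
    exact Finset.sum_comm
  have count2 : ∀ B ∈ T, (A0.filter (fun A => Disjoint A B)).card ≤ (m - b).choose a := by
    intro B hBT
    have hBmem := Finset.mem_powersetCard.1 ((Finset.mem_sdiff.1 hBT).1)
    have hsub : A0.filter (fun A => Disjoint A B) ⊆ (S \ B).powersetCard a := by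
      intro A hA
      rw [Finset.mem_filter] at hA
      have hAmem := Finset.mem_powersetCard.1 (hA0 hA.1)
      rw [Finset.mem_powersetCard]
      refine ⟨fun x hx => Finset.mem_sdiff.2 ⟨hAmem.1 hx, fun hxB =>
        (Finset.disjoint_left.1 hA.2 hx) hxB⟩, hAmem.2⟩
    calc (A0.filter (fun A => Disjoint A B)).card ≤ ((S \ B).powersetCard a).card :=
          Finset.card_le_card hsub
      _ = (m - b).choose a := by
          rw [Finset.card_powersetCard, Finset.card_sdiff_of_subset hBmem.1, hBmem.2]
  have hTcard : T.card = m.choose b - B0.card := by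
    rw [hT, Finset.card_sdiff_of_subset hB0, Finset.card_powersetCard]
  have main : A0.card * (m - a).choose b ≤ (m.choose b - B0.card) * (m - b).choose a := by
    rw [count1, swap, ← hTcard]
    calc ∑ B ∈ T, (A0.filter (fun A => Disjoint A B)).card
        ≤ ∑ _B ∈ T, (m - b).choose a := Finset.sum_le_sum count2
      _ = T.card * (m - b).choose a := by simp [mul_comm]
  -- choose identity
  have hid : m.choose a * (m - a).choose b = m.choose b * (m - b).choose a := by
    have h1 := Nat.choose_mul (n := m) (k := a + b) (s := a) (Nat.le_add_right a b)
    have h2 := Nat.choose_mul (n := m) (k := a + b) (s := b) (Nat.le_add_left b a)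
    simp only [Nat.add_sub_cancel_left, Nat.add_sub_cancel] at h1 h2
    rw [← h1, ← h2, Nat.choose_symm_add]
  have hC2pos : 0 < (m - b).choose a :=
    Nat.choose_pos (by omega)
  have hB0le : B0.card ≤ m.choose b := by
    calc B0.card ≤ (S.powersetCard b).card := Finset.card_le_card hB0
      _ = m.choose b := Finset.card_powersetCard _ _
  -- multiply main by m.choose a and cancel
  have key : A0.card * m.choose b ≤ (m.choose b - B0.card) * m.choose a := by
    have h3 : A0.card * m.choose b * (m - b).choose a ≤
        (m.choose b - B0.card) * m.choose a * (m - b).choose a := by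
      calc A0.card * m.choose b * (m - b).choose a
          = A0.card * (m.choose b * (m - b).choose a) := by ring
        _ = A0.card * (m.choose a * (m - a).choose b) := by rw [hid]
        _ = m.choose a * (A0.card * (m - a).choose b) := by ring
        _ ≤ m.choose a * ((m.choose b - B0.card) * (m - b).choose a) :=
            Nat.mul_le_mul_left _ main
        _ = (m.choose b - B0.card) * m.choose a * (m - b).choose a := by ring
    exact Nat.le_of_mul_le_mul_right h3 hC2pos
  have : (m.choose b - B0.card) * m.choose a = m.choose b * m.choose a - B0.card * m.choose a :=
    Nat.sub_mul _ _ _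
  have hBX : B0.card * m.choose a ≤ m.choose b * m.choose a :=
    Nat.mul_le_mul_right _ hB0le
  rw [mul_comm (m.choose a) (m.choose b)]
  omega

theorem stmt_13 (n j k l : ℕ) (β : ℝ) (hβ : 0 < β) (hjn : j + 2 ≤ n)
    (hsum : (k - 1) + (l - j) ≤ n - j - 1)
    (A0 : Finset (Finset ℕ)) (hA0 : A0 ⊆ (Finset.Icc (j + 2) n).powersetCard (k - 1))
    (B0 : Finset (Finset ℕ)) (hB0 : B0 ⊆ (Finset.Icc (j + 2) n).powersetCard (l - j))
    (hcross : ∀ A ∈ A0, ∀ B ∈ B0, (A ∩ B).Nonempty) :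
    (A0.card : ℝ) + β * B0.card ≤
      max ((n - j - 1).choose (k - 1) : ℝ) (β * ((n - j - 1).choose (l - j))) := by
  set S := Finset.Icc (j + 2) n with hS
  have hScard : S.card = n - j - 1 := by
    rw [hS, Nat.card_Icc]; omega
  have hab : (k - 1) + (l - j) ≤ S.card := by omega
  have key := cross_int_count S (k - 1) (l - j) hab A0 B0 hA0 hB0 hcross
  rw [hScard] at key
  set m := n - j - 1 with hm
  set X := m.choose (k - 1) with hX
  set Y := m.choose (l - j) with hY
  have hXpos : 0 < X := Nat.choose_pos (by omega)
  have hYpos : 0 < Y := Nat.choose_pos (by omega)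
  -- cast to ℝ
  have keyR : (A0.card : ℝ) * Y + B0.card * X ≤ X * Y := by
    exact_mod_cast key
  have hXR : (0:ℝ) < X := by exact_mod_cast hXpos
  have hYR : (0:ℝ) < Y := by exact_mod_cast hYpos
  set M := max (X : ℝ) (β * Y) with hM
  have hXM : (X : ℝ) ≤ M := le_max_left _ _
  have hYM : β * Y ≤ M := le_max_right _ _
  have hA0nn : (0:ℝ) ≤ A0.card := Nat.cast_nonneg _
  have hB0nn : (0:ℝ) ≤ B0.card := Nat.cast_nonneg _
  -- (A0 + β B0) * (X*Y) ≤ M * (X*Y)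
  have h1 : ((A0.card : ℝ) + β * B0.card) * (X * Y) ≤ M * (X * Y) := by
    nlinarith [mul_le_mul_of_nonneg_left keyR (le_of_lt (lt_of_lt_of_le hXR hXM)),
      mul_le_mul_of_nonneg_right hXM (mul_nonneg hA0nn hYR.le),
      mul_le_mul_of_nonneg_right hYM (mul_nonneg hB0nn hXR.le),
      mul_le_mul_of_nonneg_left keyR (hXR.trans_le hXM).le]
  exact le_of_mul_le_mul_right h1 (by positivity)
end

section
/- Let s ≥ 2, s+1 ≤ q ≤ 2s+1 and n ≥ 2s+2. The maximum number of edges in a graph on n vertices with matching number at most s and clique number at least q equals max{ C(2s+1, 2), C(q,2) + (2s+1-q)(n-q) }. -/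
open Finset

namespace EG

variable {G : Finset (Finset ℕ)} {i j : ℕ}

lemma pair_mem_pairs {n a b : ℕ} (h1 : 1 ≤ a) (hab : a < b) (hbn : b ≤ n) :
    ({a, b} : Finset ℕ) ∈ (Icc 1 n).powersetCard 2 := by
  rw [Finset.mem_powersetCard]
  refine ⟨?_, Finset.card_pair hab.ne⟩
  intro x hx
  simp only [Finset.mem_insert, Finset.mem_singleton] at hx
  rcases hx with rfl | rfl <;> simp [Finset.mem_Icc] <;> omega

lemma exists_pair_repr {n : ℕ} {e : Finset ℕ} (he : e ∈ (Icc 1 n).powersetCard 2) :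
    ∃ a b, a < b ∧ 1 ≤ a ∧ b ≤ n ∧ e = {a, b} := by
  rw [Finset.mem_powersetCard] at he
  obtain ⟨hsub, hcard⟩ := he
  obtain ⟨x, y, hxy, rfl⟩ := Finset.card_eq_two.1 hcard
  have hx : x ∈ Icc 1 n := hsub (by simp)
  have hy : y ∈ Icc 1 n := hsub (by simp)
  rw [Finset.mem_Icc] at hx hy
  rcases lt_or_gt_of_ne hxy with h | h
  · exact ⟨x, y, h, hx.1, hy.2, rfl⟩
  · exact ⟨y, x, h, hy.1, hx.2, Finset.pair_comm x y⟩

lemma mem_pair {a b x : ℕ} : x ∈ ({a, b} : Finset ℕ) ↔ x = a ∨ x = b := by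
  simp [Finset.mem_insert, Finset.mem_singleton]

lemma pair_disjoint {a b c d : ℕ} (h1 : a ≠ c) (h2 : a ≠ d) (h3 : b ≠ c) (h4 : b ≠ d) :
    Disjoint ({a, b} : Finset ℕ) ({c, d} : Finset ℕ) := by
  rw [Finset.disjoint_left]
  intro x hx hx'
  rw [mem_pair] at hx hx'
  rcases hx with rfl | rfl <;> rcases hx' with rfl | rfl <;> simp_all

lemma sum_inter_card_le (M : Finset (Finset ℕ)) (A : Finset ℕ)
    (hd : (M : Set (Finset ℕ)).PairwiseDisjoint id) :
    ∑ e ∈ M, (e ∩ A).card ≤ A.card := by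
  have h1 : (M.biUnion (· ∩ A)).card = ∑ e ∈ M, (e ∩ A).card := by
    apply Finset.card_biUnion
    intro x hx y hy hxy
    exact (hd (Finset.mem_coe.2 hx) (Finset.mem_coe.2 hy) hxy).mono
      Finset.inter_subset_left Finset.inter_subset_left
  rw [← h1]
  apply Finset.card_le_card
  intro x hx
  rw [Finset.mem_biUnion] at hx
  obtain ⟨e, _, hxe⟩ := hx
  exact (Finset.mem_inter.1 hxe).2

/-- closure property of stable (shifted) graphs -/
def Closed (G : Finset (Finset ℕ)) : Prop :=
  ∀ ⦃a b a' b' : ℕ⦄, ({a, b} : Finset ℕ) ∈ G → a < b → 1 ≤ a' → a' ≤ a → b' ≤ b → a' < b' →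
    ({a', b'} : Finset ℕ) ∈ G

def Stable (G : Finset (Finset ℕ)) : Prop :=
  ∀ i j : ℕ, 1 ≤ i → i < j → ∀ e ∈ G, j ∈ e → i ∉ e → insert i (e.erase j) ∈ G

lemma Stable.closed {G : Finset (Finset ℕ)} (hs : Stable G) : Closed G := by
  intro a b a' b' hab hlt ha1 ha hb hab'
  have step1 : ({a', b} : Finset ℕ) ∈ G := by
    rcases eq_or_lt_of_le ha with rfl | hlt'
    · exact hab
    · have := hs a' a ha1 hlt' _ hab (by rw [mem_pair]; left; rfl)
        (by rw [mem_pair]; push_neg; omega)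
      have he : ({a, b} : Finset ℕ).erase a = {b} := by
        rw [show ({a, b} : Finset ℕ) = insert a {b} from rfl,
          Finset.erase_insert (by simp; omega)]
      rwa [he] at this
  rcases eq_or_lt_of_le hb with rfl | hlt'
  · exact step1
  · have := hs b' b (by omega) hlt' _ step1 (by rw [mem_pair]; right; rfl)
      (by rw [mem_pair]; push_neg; omega)
    have he : ({a', b} : Finset ℕ).erase b = {a'} := by
      rw [show ({a', b} : Finset ℕ) = insert a' {b} from rfl]
      rw [Finset.erase_insert_of_ne (by omega), Finset.erase_singleton]
      rfl
    rw [he] at this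
    rwa [show insert b' ({a'} : Finset ℕ) = {b', a'} from rfl, Finset.pair_comm] at this


variable {G : Finset (Finset ℕ)} {i j : ℕ}

def cmove (i j : ℕ) (G : Finset (Finset ℕ)) (e : Finset ℕ) : Finset ℕ :=
  if j ∈ e ∧ i ∉ e ∧ insert i (e.erase j) ∉ G then insert i (e.erase j) else e

def compress (i j : ℕ) (G : Finset (Finset ℕ)) : Finset (Finset ℕ) :=
  G.image (cmove i j G)

lemma cmove_spec (hij : i < j) (e : Finset ℕ) :
    (cmove i j G e = e ∧ (j ∈ e → i ∉ e → insert i (e.erase j) ∈ G)) ∨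
    (j ∈ e ∧ i ∉ e ∧ insert i (e.erase j) ∉ G ∧ cmove i j G e = insert i (e.erase j)) := by
  unfold cmove
  by_cases h : j ∈ e ∧ i ∉ e ∧ insert i (e.erase j) ∉ G
  · right; rw [if_pos h]; exact ⟨h.1, h.2.1, h.2.2, rfl⟩
  · left; rw [if_neg h]; push_neg at h; exact ⟨rfl, fun h1 h2 => h h1 h2⟩

lemma erase_insert_cancel {e : Finset ℕ} (hj : j ∈ e) (hi : i ∉ e) :
    insert j ((insert i (e.erase j)).erase i) = e := by
  rw [Finset.erase_insert (by simp [Finset.mem_erase]; intro _; exact hi)]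
  exact Finset.insert_erase hj

lemma cmove_injOn (hij : i < j) : Set.InjOn (cmove i j G) ↑G := by
  intro e1 he1 e2 he2 heq
  rcases cmove_spec (G := G) hij e1 with ⟨h1, _⟩ | ⟨hj1, hi1, hn1, h1⟩ <;>
    rcases cmove_spec (G := G) hij e2 with ⟨h2, _⟩ | ⟨hj2, hi2, hn2, h2⟩
  · rw [h1, h2] at heq; exact heq
  · rw [h1, h2] at heq; exact absurd (heq ▸ he1) hn2
  · rw [h1, h2] at heq; exact absurd (heq.symm ▸ he2) hn1
  · rw [h1, h2] at heq
    have h3 := congrArg (fun s => insert j (Finset.erase s i)) heq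
    rw [erase_insert_cancel hj1 hi1, erase_insert_cancel hj2 hi2] at h3
    exact h3

lemma compress_card (hij : i < j) : (compress i j G).card = G.card :=
  Finset.card_image_of_injOn (cmove_injOn hij)

lemma mem_compress_of_untouched {e : Finset ℕ} (he : e ∈ G) (hje : j ∉ e) :
    e ∈ compress i j G := by
  rw [compress, Finset.mem_image]
  refine ⟨e, he, ?_⟩
  unfold cmove
  rw [if_neg (by tauto)]

lemma compress_subset_pairs {n : ℕ} (hij : i < j) (hi : 1 ≤ i) (hjn : j ≤ n)
    (hG : G ⊆ (Icc 1 n).powersetCard 2) :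
    compress i j G ⊆ (Icc 1 n).powersetCard 2 := by
  intro e he
  rw [compress, Finset.mem_image] at he
  obtain ⟨g, hg, rfl⟩ := he
  rcases cmove_spec (G := G) hij g with ⟨h1, _⟩ | ⟨hjg, hig, _, h1⟩
  · rw [h1]; exact hG hg
  · rw [h1]
    have hg2 := hG hg
    rw [Finset.mem_powersetCard] at hg2 ⊢
    constructor
    · intro x hx
      rw [Finset.mem_insert] at hx
      rcases hx with rfl | hx
      · rw [Finset.mem_Icc]; omega
      · exact hg2.1 (Finset.mem_of_mem_erase hx)
    · rw [Finset.card_insert_of_notMem (by simp [Finset.mem_erase]; intro _; exact hig),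
        Finset.card_erase_of_mem hjg, hg2.2]


def wt (G : Finset (Finset ℕ)) : ℕ := ∑ e ∈ G, ∑ x ∈ e, x

lemma compress_wt_lt (hij : i < j)
    (h : ∃ e ∈ G, j ∈ e ∧ i ∉ e ∧ insert i (e.erase j) ∉ G) :
    wt (compress i j G) < wt G := by
  obtain ⟨e0, he0, hje0, hie0, hne0⟩ := h
  have hsum : wt (compress i j G) = ∑ e ∈ G, ∑ x ∈ cmove i j G e, x := by
    rw [wt, compress, Finset.sum_image]
    intro x hx y hy hxy
    exact cmove_injOn hij hx hy hxy
  rw [hsum, wt]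
  apply Finset.sum_lt_sum
  · intro e he
    rcases cmove_spec (G := G) hij e with ⟨h1, _⟩ | ⟨hje, hie, _, h1⟩
    · rw [h1]
    · rw [h1, Finset.sum_insert (by simp [Finset.mem_erase]; intro _; exact hie)]
      have h2 : ∑ x ∈ e.erase j, x + j = ∑ x ∈ e, x := Finset.sum_erase_add e _ hje
      omega
  · refine ⟨e0, he0, ?_⟩
    have h1 : cmove i j G e0 = insert i (e0.erase j) := by
      unfold cmove; rw [if_pos ⟨hje0, hie0, hne0⟩]
    rw [h1, Finset.sum_insert (by simp [Finset.mem_erase]; intro _; exact hie0)]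
    have h2 : ∑ x ∈ e0.erase j, x + j = ∑ x ∈ e0, x := Finset.sum_erase_add e0 _ hje0
    omega

lemma compress_matching {s : ℕ} (hij : i < j) (hM : MatchingLE G s) :
    MatchingLE (compress i j G) s := by
  intro M hMsub hMd
  suffices h : ∃ M' ⊆ G, (M' : Set (Finset ℕ)).PairwiseDisjoint id ∧ M'.card = M.card by
    obtain ⟨M', h1, h2, h3⟩ := h
    rw [← h3]; exact hM M' h1 h2
  by_cases hMG : ∀ e ∈ M, e ∈ G
  · exact ⟨M, fun e he => hMG e he, hMd, rfl⟩
  push_neg at hMG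
  obtain ⟨e, heM, heG⟩ := hMG
  -- e is a moved image
  obtain ⟨g, hgG, hge⟩ := Finset.mem_image.1 (hMsub heM)
  rcases cmove_spec (G := G) hij g with ⟨h1, _⟩ | ⟨hjg, hig, hng, h1⟩
  · refine absurd ?_ heG; rw [← hge, h1]; exact hgG
  rw [h1] at hge
  -- facts about e
  have hie : i ∈ e := hge ▸ Finset.mem_insert_self _ _
  have hje : j ∉ e := by
    rw [← hge]
    simp only [Finset.mem_insert, Finset.mem_erase]
    push_neg
    exact ⟨by omega, fun h _ => h rfl⟩
  have hgeq : g = insert j (e.erase i) := by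
    rw [← hge, erase_insert_cancel hjg hig]
  -- any member of M other than e is in G
  have hrestG : ∀ m ∈ M, m ≠ e → m ∈ G := by
    intro m hmM hme
    by_contra hmG
    obtain ⟨g', hg'G, hg'm⟩ := Finset.mem_image.1 (hMsub hmM)
    rcases cmove_spec (G := G) hij g' with ⟨h2, _⟩ | ⟨_, _, _, h2⟩
    · refine absurd ?_ hmG; rw [← hg'm, h2]; exact hg'G
    · rw [h2] at hg'm
      have him : i ∈ m := hg'm ▸ Finset.mem_insert_self _ _
      exact hme (by
        by_contra hne
        exact (Finset.disjoint_left.1 (hMd (Finset.mem_coe.2 hmM) (Finset.mem_coe.2 heM) hne) him) hie)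
  by_cases hjM : ∃ f ∈ M, j ∈ f
  · obtain ⟨f, hfM, hjf⟩ := hjM
    have hef : e ≠ f := fun h => hje (h ▸ hjf)
    have hfG : f ∈ G := hrestG f hfM (Ne.symm hef)
    have hif : i ∉ f := fun h =>
      (Finset.disjoint_left.1 (hMd (Finset.mem_coe.2 heM) (Finset.mem_coe.2 hfM) hef) hie) h
    -- f is unmoved hence insert i (f.erase j) ∈ G
    have hf' : insert i (f.erase j) ∈ G := by
      obtain ⟨g'', hg''G, hg''f⟩ := Finset.mem_image.1 (hMsub hfM)
      rcases cmove_spec (G := G) hij g'' with ⟨h2, h3⟩ | ⟨_, _, _, h2⟩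
      · rw [h2] at hg''f; subst hg''f; exact h3 hjf hif
      · rw [h2] at hg''f
        exact absurd (hg''f ▸ Finset.mem_insert_self i _) hif
    set f' := insert i (f.erase j) with hf'def
    set rest := (M.erase f).erase e with hrest
    have hrest_mem : ∀ m ∈ rest, m ∈ M ∧ m ≠ e ∧ m ≠ f := by
      intro m hm
      rw [hrest, Finset.mem_erase, Finset.mem_erase] at hm
      exact ⟨hm.2.2, hm.1, hm.2.1⟩
    have hDisj : ∀ m ∈ M, m ≠ e → m ≠ f → Disjoint g m ∧ Disjoint f' m := by
      intro m hmM hme hmf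
      have hdm_e : Disjoint e m := hMd (Finset.mem_coe.2 heM) (Finset.mem_coe.2 hmM) (Ne.symm hme)
      have hdm_f : Disjoint f m := hMd (Finset.mem_coe.2 hfM) (Finset.mem_coe.2 hmM) (Ne.symm hmf)
      constructor
      · rw [Finset.disjoint_left]
        intro x hx
        rw [hgeq, Finset.mem_insert] at hx
        rcases hx with rfl | hx
        · intro hxm
          exact hmf (by
            by_contra hne
            exact (Finset.disjoint_left.1 hdm_f hjf) (hxm) |>.elim) |>.elim
        · exact Finset.disjoint_left.1 hdm_e (Finset.mem_of_mem_erase hx)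
      · rw [Finset.disjoint_left]
        intro x hx
        rw [hf'def, Finset.mem_insert] at hx
        rcases hx with rfl | hx
        · intro hxm
          exact hme (by
            by_contra hne
            exact (Finset.disjoint_left.1 hdm_e hie) hxm |>.elim) |>.elim
        · exact Finset.disjoint_left.1 hdm_f (Finset.mem_of_mem_erase hx)
    have hDgf' : Disjoint g f' := by
      rw [Finset.disjoint_left]
      intro x hx
      rw [hgeq, Finset.mem_insert] at hx
      rw [hf'def, Finset.mem_insert]
      push_neg
      rcases hx with rfl | hx
      · exact ⟨by omega, by simp [Finset.mem_erase]⟩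
      · have hxe : x ∈ e := Finset.mem_of_mem_erase hx
        have hxi : x ≠ i := (Finset.mem_erase.1 hx).1
        refine ⟨hxi, fun hxf => ?_⟩
        exact (Finset.disjoint_left.1 (hMd (Finset.mem_coe.2 heM) (Finset.mem_coe.2 hfM) hef) hxe)
          (Finset.mem_of_mem_erase hxf)
    refine ⟨insert g (insert f' rest), ?_, ?_, ?_⟩
    · intro m hm
      rw [Finset.mem_insert, Finset.mem_insert] at hm
      rcases hm with rfl | rfl | hm
      · exact hgG
      · exact hf'
      · obtain ⟨h1', h2', h3'⟩ := hrest_mem m hm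
        exact hrestG m h1' h2'
    · intro x hx y hy hxy
      simp only [Finset.coe_insert, Set.mem_insert_iff, Finset.mem_coe] at hx hy
      have key : ∀ m ∈ rest, Disjoint g m ∧ Disjoint f' m := by
        intro m hm
        obtain ⟨h1', h2', h3'⟩ := hrest_mem m hm
        exact hDisj m h1' h2' h3'
      rcases hx with rfl | rfl | hx <;> rcases hy with rfl | rfl | hy
      · exact absurd rfl hxy
      · exact hDgf'
      · exact (key _ hy).1
      · exact hDgf'.symm
      · exact absurd rfl hxy
      · exact (key _ hy).2
      · exact ((key _ hx).1).symm
      · exact ((key _ hx).2).symm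
      · exact hMd (Finset.mem_coe.2 (hrest_mem _ hx).1) (Finset.mem_coe.2 (hrest_mem _ hy).1) hxy
    · -- cardinality
      have hjf' : j ∉ f' := by
        rw [hf'def]
        simp only [Finset.mem_insert, Finset.mem_erase]
        push_neg
        exact ⟨by omega, fun h _ => h rfl⟩
      have hjrest : ∀ m ∈ rest, j ∉ m := by
        intro m hm hjm
        obtain ⟨h1', h2', h3'⟩ := hrest_mem m hm
        exact h3' (by
          by_contra hne
          exact (Finset.disjoint_left.1 (hMd (Finset.mem_coe.2 h1') (Finset.mem_coe.2 hfM) hne) hjm) hjf)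
      have hjg : j ∈ g := hgeq ▸ Finset.mem_insert_self _ _
      have hgne : g ∉ insert f' rest := by
        rw [Finset.mem_insert]
        push_neg
        exact ⟨fun h => hjf' (h ▸ hjg), fun h => hjrest g h hjg⟩
      have hif' : i ∈ f' := hf'def ▸ Finset.mem_insert_self _ _
      have hf'rest : f' ∉ rest := by
        intro h
        obtain ⟨h1', h2', h3'⟩ := hrest_mem f' h
        exact h2' (by
          by_contra hne
          exact (Finset.disjoint_left.1 (hMd (Finset.mem_coe.2 h1') (Finset.mem_coe.2 heM) hne) hif') hie)
      rw [Finset.card_insert_of_notMem hgne, Finset.card_insert_of_notMem hf'rest, hrest,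
        Finset.card_erase_of_mem (Finset.mem_erase.2 ⟨hef, heM⟩), Finset.card_erase_of_mem hfM]
      have : 2 ≤ M.card := Finset.one_lt_card.2 ⟨e, heM, f, hfM, hef⟩
      omega
  · push_neg at hjM
    set rest := M.erase e with hrest
    refine ⟨insert g rest, ?_, ?_, ?_⟩
    · intro m hm
      rw [Finset.mem_insert] at hm
      rcases hm with rfl | hm
      · exact hgG
      · exact hrestG m (Finset.mem_of_mem_erase hm) (Finset.mem_erase.1 hm).1
    · intro x hx y hy hxy
      simp only [Finset.coe_insert, Set.mem_insert_iff, Finset.mem_coe] at hx hy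
      have key : ∀ m ∈ rest, Disjoint g m := by
        intro m hm
        have hmM := Finset.mem_of_mem_erase hm
        have hme := (Finset.mem_erase.1 hm).1
        rw [Finset.disjoint_left]
        intro x hx
        rw [hgeq, Finset.mem_insert] at hx
        rcases hx with rfl | hx
        · exact fun hxm => hjM m hmM hxm
        · exact Finset.disjoint_left.1
            (hMd (Finset.mem_coe.2 heM) (Finset.mem_coe.2 hmM) (Ne.symm hme))
            (Finset.mem_of_mem_erase hx)
      rcases hx with rfl | hx <;> rcases hy with rfl | hy
      · exact absurd rfl hxy
      · exact key _ hy
      · exact (key _ hx).symm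
      · exact hMd (Finset.mem_coe.2 (Finset.mem_of_mem_erase hx))
          (Finset.mem_coe.2 (Finset.mem_of_mem_erase hy)) hxy
    · have hjg : j ∈ g := hgeq ▸ Finset.mem_insert_self _ _
      have hgrest : g ∉ rest := fun h => hjM g (Finset.mem_of_mem_erase h) hjg
      rw [Finset.card_insert_of_notMem hgrest, hrest, Finset.card_erase_of_mem heM]
      have : 1 ≤ M.card := Finset.card_pos.2 ⟨e, heM⟩
      omega


lemma compress_clique {n q : ℕ} (hi : 1 ≤ i) (hij : i < j) (hjn : j ≤ n)
    (hQ : HasClique n G 2 q) : HasClique n (compress i j G) 2 q := by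
  obtain ⟨Q, hQsub, hQcard, hQpairs⟩ := hQ
  by_cases hjQ : j ∈ Q
  · by_cases hiQ : i ∈ Q
    · refine ⟨Q, hQsub, hQcard, ?_⟩
      intro p hp
      have hpG : p ∈ G := hQpairs hp
      rw [Finset.mem_powersetCard] at hp
      by_cases hjp : j ∈ p
      · by_cases hip : i ∈ p
        · rw [compress, Finset.mem_image]
          refine ⟨p, hpG, ?_⟩
          unfold cmove
          rw [if_neg (by tauto)]
        · have hin : insert i (p.erase j) ∈ G := by
            apply hQpairs
            rw [Finset.mem_powersetCard]
            constructor
            · exact Finset.insert_subset hiQ ((Finset.erase_subset _ _).trans hp.1)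
            · rw [Finset.card_insert_of_notMem (fun h => hip (Finset.mem_of_mem_erase h)),
                Finset.card_erase_of_mem hjp, hp.2]
          rw [compress, Finset.mem_image]
          refine ⟨p, hpG, ?_⟩
          unfold cmove
          rw [if_neg (by tauto)]
      · exact mem_compress_of_untouched hpG hjp
    · refine ⟨insert i (Q.erase j), ?_, ?_, ?_⟩
      · apply Finset.insert_subset
        · rw [Finset.mem_Icc]; omega
        · exact (Finset.erase_subset _ _).trans hQsub
      · rw [Finset.card_insert_of_notMem (fun h => hiQ (Finset.mem_of_mem_erase h)),
          Finset.card_erase_of_mem hjQ, hQcard]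
        have : 1 ≤ q := by
          rw [← hQcard]
          exact Finset.card_pos.2 ⟨j, hjQ⟩
        omega
      · intro p hp
        rw [Finset.mem_powersetCard] at hp
        have hjQ' : j ∉ insert i (Q.erase j) := by
          rw [Finset.mem_insert]
          push_neg
          exact ⟨by omega, fun h => (Finset.mem_erase.1 h).1 rfl⟩
        have hjp : j ∉ p := fun h => hjQ' (hp.1 h)
        by_cases hip : i ∈ p
        · set p0 := p.erase i with hp0def
          have hpi : p = insert i p0 := (Finset.insert_erase hip).symm
          have hp0sub : p0 ⊆ Q.erase j := by
            intro x hx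
            have hx1 := Finset.mem_erase.1 hx
            have := hp.1 hx1.2
            rw [Finset.mem_insert] at this
            rcases this with rfl | h
            · exact absurd rfl hx1.1
            · exact h
          have hip0 : i ∉ p0 := fun h => (Finset.mem_erase.1 h).1 rfl
          have hjp0 : j ∉ p0 := fun h => hjp (Finset.mem_of_mem_erase h)
          have hp1G : insert j p0 ∈ G := by
            apply hQpairs
            rw [Finset.mem_powersetCard]
            constructor
            · exact Finset.insert_subset hjQ (hp0sub.trans (Finset.erase_subset _ _))
            · rw [Finset.card_insert_of_notMem hjp0, Finset.card_erase_of_mem hip, hp.2]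
          have hperase : (insert j p0).erase j = p0 := Finset.erase_insert hjp0
          by_cases hpg : insert i p0 ∈ G
          · exact mem_compress_of_untouched (hpi ▸ hpg) hjp
          · rw [compress, Finset.mem_image]
            refine ⟨insert j p0, hp1G, ?_⟩
            unfold cmove
            rw [if_pos ?_, hperase, ← hpi]
            refine ⟨Finset.mem_insert_self _ _, ?_, ?_⟩
            · rw [Finset.mem_insert]
              push_neg
              refine ⟨by omega, fun h => ?_⟩
              exact hiQ ((hp0sub.trans (Finset.erase_subset _ _)) h)
            · rw [hperase]; exact hpg
        · have hpQ : p ⊆ Q := by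
            intro x hx
            have := hp.1 hx
            rw [Finset.mem_insert] at this
            rcases this with rfl | h
            · exact absurd hx hip
            · exact Finset.mem_of_mem_erase h
          exact mem_compress_of_untouched
            (hQpairs (Finset.mem_powersetCard.2 ⟨hpQ, hp.2⟩)) hjp
  · refine ⟨Q, hQsub, hQcard, ?_⟩
    intro p hp
    have hjp : j ∉ p := fun h => hjQ ((Finset.mem_powersetCard.1 hp).1 h)
    exact mem_compress_of_untouched (hQpairs hp) hjp


lemma exists_stable (n s q : ℕ) :
    ∀ w (G : Finset (Finset ℕ)), wt G ≤ w → G ⊆ (Icc 1 n).powersetCard 2 → MatchingLE G s →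
      HasClique n G 2 q →
      ∃ H, H ⊆ (Icc 1 n).powersetCard 2 ∧ MatchingLE H s ∧ HasClique n H 2 q ∧
        H.card = G.card ∧ Stable H := by
  intro w
  induction w with
  | zero =>
    intro G hw hG hM hQ
    by_cases hst : Stable G
    · exact ⟨G, hG, hM, hQ, rfl, hst⟩
    · exfalso
      unfold Stable at hst
      push_neg at hst
      obtain ⟨i, j, hi, hij, e, he, hje, hie, hne⟩ := hst
      have := compress_wt_lt hij ⟨e, he, hje, hie, hne⟩
      omega
  | succ w IH =>
    intro G hw hG hM hQ
    by_cases hst : Stable G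
    · exact ⟨G, hG, hM, hQ, rfl, hst⟩
    · unfold Stable at hst
      push_neg at hst
      obtain ⟨i, j, hi, hij, e, he, hje, hie, hne⟩ := hst
      have hjn : j ≤ n := by
        have h1 := hG he
        rw [Finset.mem_powersetCard] at h1
        have h2 := h1.1 hje
        rw [Finset.mem_Icc] at h2
        omega
      have hlt := compress_wt_lt hij ⟨e, he, hje, hie, hne⟩
      obtain ⟨H, h1, h2, h3, h4, h5⟩ := IH (compress i j G) (by omega)
        (compress_subset_pairs hij hi hjn hG) (compress_matching hij hM)
        (compress_clique hi hij hjn hQ)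
      exact ⟨H, h1, h2, h3, by rw [h4, compress_card hij], h5⟩


lemma clique_normalize {n q : ℕ} (hC : Closed G) (hQ : HasClique n G 2 q) :
    (Icc 1 q).powersetCard 2 ⊆ G := by
  obtain ⟨Q, hQsub, hQcard, hQpairs⟩ := hQ
  intro p hp
  obtain ⟨a, b, hab, ha1, hbq, rfl⟩ := exists_pair_repr hp
  have hlb : ∀ m (h : m < q), m + 1 ≤ Q.orderEmbOfFin hQcard ⟨m, h⟩ := by
    intro m
    induction m with
    | zero =>
      intro h
      have := hQsub (Finset.orderEmbOfFin_mem Q hQcard ⟨0, h⟩)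
      rw [Finset.mem_Icc] at this
      omega
    | succ m ih =>
      intro h
      have h1 : m < q := by omega
      have h2 : Q.orderEmbOfFin hQcard ⟨m, h1⟩ < Q.orderEmbOfFin hQcard ⟨m + 1, h⟩ := by
        apply (Q.orderEmbOfFin hQcard).strictMono
        exact Fin.mk_lt_mk.2 (by omega)
      have := ih h1
      omega
  have haq : a - 1 < q := by omega
  have hbq' : b - 1 < q := by omega
  set x := Q.orderEmbOfFin hQcard ⟨a - 1, haq⟩ with hx
  set y := Q.orderEmbOfFin hQcard ⟨b - 1, hbq'⟩ with hy
  have hxy : x < y := (Q.orderEmbOfFin hQcard).strictMono (Fin.mk_lt_mk.2 (by omega))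
  have hxyG : ({x, y} : Finset ℕ) ∈ G := by
    apply hQpairs
    rw [Finset.mem_powersetCard]
    constructor
    · intro z hz
      rw [mem_pair] at hz
      rcases hz with rfl | rfl
      · exact Finset.orderEmbOfFin_mem Q hQcard _
      · exact Finset.orderEmbOfFin_mem Q hQcard _
    · exact Finset.card_pair hxy.ne
  have hax : a ≤ x := by have := hlb (a - 1) haq; omega
  have hby : b ≤ y := by have := hlb (b - 1) hbq'; omega
  exact hC hxyG hxy ha1 hax hby hab

lemma pair_min' {a b : ℕ} (h : a < b) (hne : ({a, b} : Finset ℕ).Nonempty) :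
    ({a, b} : Finset ℕ).min' hne = a := by
  apply le_antisymm
  · exact Finset.min'_le _ _ (by rw [mem_pair]; left; rfl)
  · apply Finset.le_min'
    intro y hy
    rw [mem_pair] at hy
    rcases hy with rfl | rfl <;> omega

lemma pair_max' {a b : ℕ} (h : a < b) (hne : ({a, b} : Finset ℕ).Nonempty) :
    ({a, b} : Finset ℕ).max' hne = b := by
  apply le_antisymm
  · apply Finset.max'_le
    intro y hy
    rw [mem_pair] at hy
    rcases hy with rfl | rfl <;> omega
  · exact Finset.le_max' _ _ (by rw [mem_pair]; right; rfl)

lemma sum_lo (n : ℕ) : ∀ P, P ≤ n → 2 * (∑ i ∈ Icc 1 P, (n - i)) + P * (P + 1) = 2 * (P * n) := by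
  intro P
  induction P with
  | zero => simp
  | succ P ih =>
    intro h
    rw [Finset.sum_Icc_succ_top (by omega)]
    have h1 := ih (by omega)
    have hx1 : (P+1) * (P+1+1) = P*(P+1) + 2*(P+1) := by ring
    have hx2 : 2 * ((P+1) * n) = 2 * (P * n) + 2 * n := by ring
    omega

lemma card_lo_bound {n P : ℕ} (hPn : P ≤ n) {H : Finset (Finset ℕ)}
    (hH : H ⊆ (Icc 1 n).powersetCard 2) (hlo : ∀ e ∈ H, ∃ x ∈ e, x ≤ P) :
    2 * H.card + P * (P + 1) ≤ 2 * (P * n) := by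
  classical
  set B := (Icc 1 P).biUnion (fun i => ({i} : Finset ℕ) ×ˢ Icc (i + 1) n) with hB
  have hrepr : ∀ e ∈ H, ∃ a b, a < b ∧ 1 ≤ a ∧ b ≤ n ∧ a ≤ P ∧ e = {a, b} := by
    intro e he
    obtain ⟨a, b, hab, h1, h2, h3⟩ := exists_pair_repr (hH he)
    obtain ⟨x, hx, hxP⟩ := hlo e he
    rw [h3, mem_pair] at hx
    refine ⟨a, b, hab, h1, h2, ?_, h3⟩
    rcases hx with rfl | rfl <;> omega
  have hcard : H.card ≤ B.card := by
    have hne : ∀ e ∈ H, e.Nonempty := by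
      intro e he
      obtain ⟨a, b, hab, _, _, _, rfl⟩ := hrepr e he
      exact ⟨a, by rw [mem_pair]; left; rfl⟩
    apply Finset.card_le_card_of_injOn
      (fun e => if h : e ∈ H then (e.min' (hne e h), e.max' (hne e h)) else (0,0))
    · intro e he
      simp only [Finset.mem_coe] at he ⊢
      rw [dif_pos he]
      obtain ⟨a, b, hab, h1, h2, h3, h4⟩ := hrepr e he
      rw [Finset.mem_biUnion]
      refine ⟨a, by rw [Finset.mem_Icc]; omega, ?_⟩
      rw [Finset.mem_product]
      subst h4
      rw [pair_min' hab, pair_max' hab]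
      constructor
      · simp
      · rw [Finset.mem_Icc]; omega
    · intro e1 he1 e2 he2 heq
      rw [Finset.mem_coe] at he1 he2
      simp only [dif_pos he1, dif_pos he2] at heq
      obtain ⟨a1, b1, hab1, _, _, _, h41⟩ := hrepr e1 he1
      obtain ⟨a2, b2, hab2, _, _, _, h42⟩ := hrepr e2 he2
      subst h41; subst h42
      rw [pair_min' hab1, pair_max' hab1, pair_min' hab2, pair_max' hab2] at heq
      rw [Prod.mk.injEq] at heq
      rw [heq.1, heq.2]
  have hBcard : B.card = ∑ i ∈ Icc 1 P, (n - i) := by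
    rw [hB, Finset.card_biUnion]
    · apply Finset.sum_congr rfl
      intro i hi
      rw [Finset.mem_Icc] at hi
      rw [Finset.card_product, Finset.card_singleton, Nat.card_Icc]
      omega
    · intro x hx y hy hxy
      rw [Function.onFun, Finset.disjoint_left]
      intro p hp hp'
      rw [Finset.mem_product, Finset.mem_singleton] at hp hp'
      exact hxy (hp.1 ▸ hp'.1 ▸ rfl)
  have := sum_lo n P hPn
  omega

lemma lift_image {P : ℕ} {e : Finset ℕ} (he : ∀ x ∈ e, P + 1 ≤ x) :
    (e.image (fun x => x - P)).image (fun x => x + P) = e := by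
  rw [Finset.image_image]
  have : e.image ((fun x => x + P) ∘ (fun x => x - P)) = e.image id := by
    apply Finset.image_congr
    intro x hx
    have := he x hx
    simp only [Function.comp_apply, id_eq]
    omega
  rw [this, Finset.image_id]

lemma k1_matching {s q t n : ℕ} {G : Finset (Finset ℕ)} (hqt : q + t = 2*s + 1)
    (hq : s + 1 ≤ q) (hn : 2*s + 2 ≤ n) (hM : MatchingLE G s)
    (hQ : (Icc 1 q).powersetCard 2 ⊆ G) (hC : Closed G)
    (hT : ({t + 1, 2*s + 2} : Finset ℕ) ∈ G) : False := by
  classical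
  have hts : t ≤ s := by omega
  set M1 := ((Icc 1 (t+1)).image (fun i => ({i, q + i} : Finset ℕ))) ∪
    ((Icc 1 (q - s - 1)).image (fun j => ({t + 2*j, t + 2*j + 1} : Finset ℕ))) with hM1
  have hmem : ∀ e ∈ M1, (∃ i, 1 ≤ i ∧ i ≤ t + 1 ∧ e = {i, q + i}) ∨
      (∃ j, 1 ≤ j ∧ j ≤ q - s - 1 ∧ e = {t + 2*j, t + 2*j + 1}) := by
    intro e he
    rw [hM1, Finset.mem_union, Finset.mem_image, Finset.mem_image] at he
    rcases he with ⟨i, hi, rfl⟩ | ⟨j, hj, rfl⟩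
    · rw [Finset.mem_Icc] at hi
      exact Or.inl ⟨i, hi.1, hi.2, rfl⟩
    · rw [Finset.mem_Icc] at hj
      exact Or.inr ⟨j, hj.1, hj.2, rfl⟩
  have hsubG : M1 ⊆ G := by
    intro e he
    rcases hmem e he with ⟨i, h1, h2, rfl⟩ | ⟨j, h1, h2, rfl⟩
    · exact hC hT (by omega) h1 (by omega) (by omega) (by omega)
    · exact hQ (pair_mem_pairs (by omega) (by omega) (by omega))
  have hdisj : (M1 : Set (Finset ℕ)).PairwiseDisjoint id := by
    intro x hx y hy hxy
    rw [Finset.mem_coe] at hx hy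
    rcases hmem x hx with ⟨i, h1, h2, rfl⟩ | ⟨j, h1, h2, rfl⟩ <;>
      rcases hmem y hy with ⟨i', h1', h2', rfl⟩ | ⟨j', h1', h2', rfl⟩
    · have hne : i ≠ i' := fun h => hxy (by rw [h])
      exact pair_disjoint (by omega) (by omega) (by omega) (by omega)
    · exact pair_disjoint (by omega) (by omega) (by omega) (by omega)
    · exact pair_disjoint (by omega) (by omega) (by omega) (by omega)
    · have hne : j ≠ j' := fun h => hxy (by rw [h])
      exact pair_disjoint (by omega) (by omega) (by omega) (by omega)
  have hcard : M1.card = s + 1 := by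
    rw [hM1, Finset.card_union_of_disjoint, Finset.card_image_of_injOn,
      Finset.card_image_of_injOn, Nat.card_Icc, Nat.card_Icc]
    · omega
    · intro j1 hja j2 hjb heq
      simp only at heq
      rw [Finset.mem_coe, Finset.mem_Icc] at hja hjb
      have : t + 2*j1 ∈ ({t + 2*j2, t + 2*j2 + 1} : Finset ℕ) := by
        rw [← heq, mem_pair]; left; rfl
      rw [mem_pair] at this
      omega
    · intro i1 hia i2 hib heq
      simp only at heq
      rw [Finset.mem_coe, Finset.mem_Icc] at hia hib
      have : i1 ∈ ({i2, q + i2} : Finset ℕ) := by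
        rw [← heq, mem_pair]; left; rfl
      rw [mem_pair] at this
      omega
    · rw [Finset.disjoint_left]
      intro e he he'
      rw [Finset.mem_image] at he he'
      obtain ⟨i, hi, rfl⟩ := he
      obtain ⟨j, hj, heq⟩ := he'
      rw [Finset.mem_Icc] at hi hj
      have : t + 2*j ∈ ({i, q + i} : Finset ℕ) := by
        rw [← heq, mem_pair]; left; rfl
      rw [mem_pair] at this
      omega
  have := hM M1 hsubG hdisj
  omega

lemma matching_hi {s P : ℕ} {G Ghi : Finset (Finset ℕ)} (hP1 : 1 ≤ P) (hPs : P ≤ s)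
    (hM : MatchingLE G s) (hPG : ({P, 2*s + 2} : Finset ℕ) ∈ G) (hC : Closed G)
    (hGhiG : Ghi ⊆ G) (hGhirange : ∀ e ∈ Ghi, e ⊆ Icc (P+1) (2*s+1) ∧ e.card = 2) :
    MatchingLE Ghi (s - P) := by
  classical
  intro M hMsub hMd
  by_contra hcon
  push_neg at hcon
  obtain ⟨N, hNsub, hNcard⟩ := Finset.exists_subset_card_eq (show s - P + 1 ≤ M.card by omega)
  have hNd : (N : Set (Finset ℕ)).PairwiseDisjoint id := hMd.subset (Finset.coe_subset.2 hNsub)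
  have hNGhi : N ⊆ Ghi := hNsub.trans hMsub
  set V := N.biUnion id with hV
  have hVsub : V ⊆ Icc (P+1) (2*s+1) := by
    intro x hx
    rw [hV, Finset.mem_biUnion] at hx
    obtain ⟨e, he, hxe⟩ := hx
    exact (hGhirange e (hNGhi he)).1 hxe
  have hVcard : V.card = 2 * (s - P + 1) := by
    rw [hV, Finset.card_biUnion (fun x hx y hy hxy => hNd (Finset.mem_coe.2 hx) (Finset.mem_coe.2 hy) hxy)]
    have hsum : ∑ u ∈ N, (id u : Finset ℕ).card = ∑ _u ∈ N, 2 :=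
      Finset.sum_congr rfl (fun e he => (hGhirange e (hNGhi he)).2)
    rw [hsum, Finset.sum_const, hNcard]
    ring
  set Vfree := (Icc (P+1) (2*s+2)) \ V with hVf
  have hVfcard : Vfree.card = P := by
    rw [hVf, Finset.card_sdiff_of_subset (hVsub.trans (Finset.Icc_subset_Icc le_rfl (by omega))),
      Nat.card_Icc, hVcard]
    omega
  have hIccP : (Icc 1 P).card = Vfree.card := by
    rw [hVfcard, Nat.card_Icc]
    omega
  set E := Finset.equivOfCardEq hIccP with hE
  set star := Finset.image
    (fun (k : {x // x ∈ Icc 1 P}) => ({(k : ℕ), ((E k : ℕ))} : Finset ℕ))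
    (Icc 1 P).attach with hstar
  have hkfact : ∀ k : {x // x ∈ Icc 1 P}, 1 ≤ (k : ℕ) ∧ (k : ℕ) ≤ P ∧
      P + 1 ≤ (E k : ℕ) ∧ (E k : ℕ) ≤ 2*s+2 ∧ (E k : ℕ) ∉ V := by
    intro k
    have h1 := k.2
    rw [Finset.mem_Icc] at h1
    have h2 : ((E k : ℕ)) ∈ Icc (P+1) (2*s+2) \ V := (E k).2
    rw [Finset.mem_sdiff, Finset.mem_Icc] at h2
    exact ⟨h1.1, h1.2, h2.1.1, h2.1.2, h2.2⟩
  have hstarmem : ∀ e ∈ star, ∃ k : {x // x ∈ Icc 1 P}, e = {(k : ℕ), ((E k : ℕ))} := by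
    intro e he
    rw [hstar, Finset.mem_image] at he
    obtain ⟨k, _, rfl⟩ := he
    exact ⟨k, rfl⟩
  have hstarG : star ⊆ G := by
    intro e he
    obtain ⟨k, rfl⟩ := hstarmem e he
    obtain ⟨h1, h2, h3, h4, h5⟩ := hkfact k
    exact hC hPG (by omega) h1 h2 h4 (by omega)
  have hNrange : ∀ e ∈ N, e ⊆ Icc (P+1) (2*s+1) := fun e he => (hGhirange e (hNGhi he)).1
  have hdisjNs : ∀ x ∈ N, ∀ y ∈ star, Disjoint x y := by
    intro x hx y hy
    obtain ⟨k, rfl⟩ := hstarmem y hy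
    obtain ⟨h1, h2, h3, h4, h5⟩ := hkfact k
    rw [Finset.disjoint_right]
    intro z hz
    rw [mem_pair] at hz
    rcases hz with rfl | rfl
    · intro hzx
      have := hNrange x hx hzx
      rw [Finset.mem_Icc] at this
      omega
    · intro hzx
      exact h5 (by rw [hV, Finset.mem_biUnion]; exact ⟨x, hx, hzx⟩)
  have hdisjM : ((N ∪ star : Finset (Finset ℕ)) : Set (Finset ℕ)).PairwiseDisjoint id := by
    intro x hx y hy hxy
    rw [Finset.mem_coe, Finset.mem_union] at hx hy
    rcases hx with hx | hx <;> rcases hy with hy | hy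
    · exact hNd (Finset.mem_coe.2 hx) (Finset.mem_coe.2 hy) hxy
    · exact hdisjNs x hx y hy
    · exact (hdisjNs y hy x hx).symm
    · obtain ⟨k, rfl⟩ := hstarmem x hx
      obtain ⟨k', rfl⟩ := hstarmem y hy
      obtain ⟨h1, h2, h3, h4, h5⟩ := hkfact k
      obtain ⟨h1', h2', h3', h4', h5'⟩ := hkfact k'
      have hkk : (k : ℕ) ≠ (k' : ℕ) := by
        intro h
        exact hxy (by rw [Subtype.coe_injective h])
      have hEkk : (E k : ℕ) ≠ (E k' : ℕ) := by
        intro h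
        exact hkk (by rw [show k = k' from E.injective (Subtype.coe_injective h)])
      exact pair_disjoint hkk (by omega) (by omega) hEkk
  have hstarcard : star.card = P := by
    rw [hstar, Finset.card_image_of_injOn, Finset.card_attach, Nat.card_Icc]
    · omega
    · intro k1 _ k2 _ heq
      simp only at heq
      obtain ⟨h1, h2, h3, h4, h5⟩ := hkfact k1
      obtain ⟨h1', h2', h3', h4', h5'⟩ := hkfact k2
      have : (k1 : ℕ) ∈ ({(k2 : ℕ), ((E k2 : ℕ))} : Finset ℕ) := by
        rw [← heq, mem_pair]; left; rfl
      rw [mem_pair] at this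
      rcases this with h | h
      · exact Subtype.coe_injective h
      · omega
  have hdisjNstar : Disjoint N star := by
    rw [Finset.disjoint_left]
    intro e he he'
    obtain ⟨k, rfl⟩ := hstarmem e he'
    obtain ⟨h1, h2, h3, h4, h5⟩ := hkfact k
    have := hNrange _ he (by rw [mem_pair]; left; rfl)
    rw [Finset.mem_Icc] at this
    omega
  have hcard : (N ∪ star).card = s + 1 := by
    rw [Finset.card_union_of_disjoint hdisjNstar, hNcard, hstarcard]
    omega
  have := hM (N ∪ star) (Finset.union_subset (hNGhi.trans hGhiG) hstarG) hdisjM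
  omega

lemma arith_final (P r Q1 m a b : ℕ) (hP : 1 ≤ P)
    (hA : 2*a + P*(P+1) ≤ 2*(P*(r+Q1+2*P+2+m)))
    (hB : 2*b ≤ max ((r+Q1+1)*(r+Q1)) ((Q1+1)*Q1 + 2*(r*(P+r)))) :
    2*(a+b) ≤ max ((r+Q1+2*P+1)*(r+Q1+2*P)) ((Q1+P+1)*(Q1+P) + 2*((P+r)*(P+r+m+1))) := by
  set O1 := (r+Q1+2*P+1)*(r+Q1+2*P) with hO1
  set O2 := (Q1+P+1)*(Q1+P) + 2*((P+r)*(P+r+m+1)) with hO2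
  rcases max_cases ((r+Q1+1)*(r+Q1)) ((Q1+1)*Q1 + 2*(r*(P+r))) with ⟨hmx, _⟩ | ⟨hmx, _⟩ <;>
    rw [hmx] at hB
  · -- inner max is the (2s'+1)(2s') branch : convexity argument
    set T := P + r with hT
    have hTpos : 0 < T := by omega
    have h1 : T * (2*a + P*(P+1)) ≤ T * (2*(P*(r+Q1+2*P+2+m))) := Nat.mul_le_mul_left T hA
    have h2 : T * (2*b) ≤ T * ((r+Q1+1)*(r+Q1)) := Nat.mul_le_mul_left T hB
    have key1 : T * (2*(P*(r+Q1+2*P+2+m))) + T * ((r+Q1+1)*(r+Q1)) + 3*P*r*T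
        = r * O1 + P * O2 + T * (P*(P+1)) := by
      rw [hT, hO1, hO2]; ring
    have h3 : T * (2*(a+b)) + T * (P*(P+1)) = T * (2*a + P*(P+1)) + T * (2*b) := by ring
    have h4 : r * O1 + P * O2 ≤ T * (max O1 O2) := by
      calc r * O1 + P * O2 ≤ r * (max O1 O2) + P * (max O1 O2) :=
            Nat.add_le_add (Nat.mul_le_mul_left r (le_max_left _ _))
              (Nat.mul_le_mul_left P (le_max_right _ _))
        _ = T * (max O1 O2) := by rw [hT]; ring
    have h5 : T * (2*(a+b)) ≤ T * (max O1 O2) := by omega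
    exact Nat.le_of_mul_le_mul_left h5 hTpos
  · -- inner max is the second branch : exact computation
    apply le_trans ?_ (le_max_right O1 O2)
    have key2 : 2*(P*(r+Q1+2*P+2+m)) + ((Q1+1)*Q1 + 2*(r*(P+r))) + 2*(r*(m+1))
        = O2 + P*(P+1) := by
      rw [hO2]; ring
    omega

lemma choose_two_double (k : ℕ) : 2 * (k.choose 2) = k * (k - 1) := by
  rw [Nat.choose_two_right, Nat.mul_div_cancel']
  rcases Nat.even_or_odd k with h | h
  · obtain ⟨c, hc⟩ := h
    exact ⟨c * (k - 1), by rw [hc]; ring⟩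
  · obtain ⟨c, hc⟩ := h
    refine ⟨k * c, ?_⟩
    have : k - 1 = 2 * c := by omega
    rw [this]; ring

lemma SUT : ∀ s q t n : ℕ, ∀ G : Finset (Finset ℕ),
    q + t = 2*s + 1 → s + 1 ≤ q → 2*s + 2 ≤ n →
    G ⊆ (Icc 1 n).powersetCard 2 → Closed G → MatchingLE G s →
    (Icc 1 q).powersetCard 2 ⊆ G →
    2 * G.card ≤ max ((2*s+1) * (2*s)) (q*(q-1) + 2*(t*(n-q))) := by
  intro s
  induction s using Nat.strong_induction_on with
  | _ s IH =>
  intro q t n G hqt hq hn hG hC hM hQ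
  classical
  have k1 : ∀ a b : ℕ, ({a, b} : Finset ℕ) ∈ G → a < b → 2*s+2 ≤ b → a ≤ t := by
    intro a b hab hlt hb
    by_contra hcon
    push_neg at hcon
    have hT : ({t+1, 2*s+2} : Finset ℕ) ∈ G := hC hab hlt (by omega) (by omega) hb (by omega)
    exact k1_matching hqt hq hn hM hQ hC hT
  set F := (Icc 1 t).filter (fun i => ({i, 2*s+2} : Finset ℕ) ∈ G) with hF
  by_cases hFne : F.Nonempty
  case neg =>
    have hFe : ∀ i, 1 ≤ i → i ≤ t → ({i, 2*s+2} : Finset ℕ) ∈ G → False := by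
      intro i h1 h2 h3
      exact hFne ⟨i, by rw [hF, Finset.mem_filter, Finset.mem_Icc]; exact ⟨⟨h1, h2⟩, h3⟩⟩
    have hGsub : G ⊆ (Icc 1 (2*s+1)).powersetCard 2 := by
      intro e he
      obtain ⟨a, b, hab, h1, h2, rfl⟩ := exists_pair_repr (hG he)
      have hb : b ≤ 2*s+1 := by
        by_contra hbc
        push_neg at hbc
        have hat := k1 a b he hab (by omega)
        have h3 : ({a, 2*s+2} : Finset ℕ) ∈ G := hC he hab h1 le_rfl (by omega) (by omega)
        exact hFe a h1 hat h3
      exact pair_mem_pairs h1 hab hb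
    have hle := Finset.card_le_card hGsub
    rw [Finset.card_powersetCard, Nat.card_Icc] at hle
    have h2 : (2*s+1+1-1) = 2*s+1 := by omega
    rw [h2] at hle
    have hch := choose_two_double (2*s+1)
    have h3 : 2*s+1-1 = 2*s := by omega
    rw [h3] at hch
    refine le_trans ?_ (le_max_left _ _)
    omega
  case pos =>
    set P := F.max' hFne with hP
    have hPmem : P ∈ F := F.max'_mem hFne
    obtain ⟨hPIcc, hPG⟩ := Finset.mem_filter.1 hPmem
    rw [Finset.mem_Icc] at hPIcc
    obtain ⟨hP1, hPt⟩ := hPIcc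
    have hPub : ∀ i, 1 ≤ i → i ≤ t → ({i, 2*s+2} : Finset ℕ) ∈ G → i ≤ P := by
      intro i h1 h2 h3
      exact F.le_max' i (by rw [hF, Finset.mem_filter, Finset.mem_Icc]; exact ⟨⟨h1, h2⟩, h3⟩)
    set Glo := G.filter (fun e => ∃ x ∈ e, x ≤ P) with hGloDef
    set Ghi := G.filter (fun e => ¬ ∃ x ∈ e, x ≤ P) with hGhiDef
    have hsplit : Glo.card + Ghi.card = G.card :=
      Finset.card_filter_add_card_filter_not _
    have hGhiG : Ghi ⊆ G := Finset.filter_subset _ _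
    have hGhirange : ∀ e ∈ Ghi, e ⊆ Icc (P+1) (2*s+1) ∧ e.card = 2 := by
      intro e he
      rw [hGhiDef, Finset.mem_filter] at he
      obtain ⟨heG, hex⟩ := he
      push_neg at hex
      obtain ⟨a, b, hab, h1, h2, rfl⟩ := exists_pair_repr (hG heG)
      have haP : P + 1 ≤ a := by
        have := hex a (by rw [mem_pair]; left; rfl)
        omega
      have hb : b ≤ 2*s+1 := by
        by_contra hbc
        push_neg at hbc
        have hat := k1 a b heG hab (by omega)
        have h3 : ({a, 2*s+2} : Finset ℕ) ∈ G := hC heG hab h1 le_rfl (by omega) (by omega)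
        have := hPub a h1 hat h3
        omega
      constructor
      · intro x hx
        rw [mem_pair] at hx
        rw [Finset.mem_Icc]
        rcases hx with rfl | rfl <;> omega
      · exact Finset.card_pair hab.ne
    have hpairhi : ∀ a b : ℕ, a < b → (({a+P, b+P} : Finset ℕ) ∈ Ghi ↔
        ({a+P, b+P} : Finset ℕ) ∈ G ∧ 1 ≤ a) := by
      intro a b hab
      rw [hGhiDef, Finset.mem_filter]
      constructor
      · intro ⟨h1, h2⟩
        push_neg at h2
        have := h2 (a+P) (by rw [mem_pair]; left; rfl)
        exact ⟨h1, by omega⟩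
      · intro ⟨h1, h2⟩
        refine ⟨h1, ?_⟩
        push_neg
        intro x hx
        rw [mem_pair] at hx
        rcases hx with rfl | rfl <;> omega
    have hPn : P ≤ n := by omega
    have hloB : 2 * Glo.card + P * (P + 1) ≤ 2 * (P * n) :=
      card_lo_bound hPn (fun e he => hG (Finset.mem_of_mem_filter e he))
        (fun e he => (Finset.mem_filter.1 he).2)
    -- the shifted-down graph on [1, 2s+1-P]
    set Gs := Ghi.image (fun e => e.image (fun x => x - P)) with hGsDef
    have hGhielem : ∀ e ∈ Ghi, ∀ x ∈ e, P + 1 ≤ x := by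
      intro e he x hx
      have := (hGhirange e he).1 hx
      rw [Finset.mem_Icc] at this
      omega
    have himg_pair : ∀ a b : ℕ, (({a+P, b+P} : Finset ℕ).image (fun x => x - P)) = {a, b} := by
      intro a b
      rw [Finset.image_insert, Finset.image_singleton]
      simp only [Nat.add_sub_cancel]
    have hGs_mem : ∀ a b : ℕ, a < b →
        (({a, b} : Finset ℕ) ∈ Gs ↔ ({a+P, b+P} : Finset ℕ) ∈ Ghi ∨
          (∃ e ∈ Ghi, e.image (fun x => x - P) = {a, b})) := by
      intro a b hab
      rw [hGsDef, Finset.mem_image]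
      constructor
      · intro ⟨e, he, heq⟩
        exact Or.inr ⟨e, he, heq⟩
      · intro h
        rcases h with h | ⟨e, he, heq⟩
        · exact ⟨_, h, himg_pair a b⟩
        · exact ⟨e, he, heq⟩
    have hGs_repr : ∀ a b : ℕ, a < b → ({a, b} : Finset ℕ) ∈ Gs →
        ({a+P, b+P} : Finset ℕ) ∈ Ghi ∧ 1 ≤ a := by
      intro a b hab hmem
      rw [hGsDef, Finset.mem_image] at hmem
      obtain ⟨e, he, heq⟩ := hmem
      have hlift : e = ({a, b} : Finset ℕ).image (fun x => x + P) := by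
        rw [← heq, lift_image (hGhielem e he)]
      rw [Finset.image_insert, Finset.image_singleton] at hlift
      have hmem2 : a + P ∈ e := by rw [hlift, mem_pair]; left; rfl
      have := hGhielem e he _ hmem2
      exact ⟨hlift ▸ he, by omega⟩
    have hGscard : Gs.card = Ghi.card := by
      rw [hGsDef]
      apply Finset.card_image_of_injOn
      intro e1 he1 e2 he2 heq
      simp only at heq
      rw [Finset.mem_coe] at he1 he2
      have h1 : (e1.image (fun x => x - P)).image (fun x => x + P) = e1 :=
        lift_image (hGhielem e1 he1)
      have h2 : (e2.image (fun x => x - P)).image (fun x => x + P) = e2 :=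
        lift_image (hGhielem e2 he2)
      rw [← h1, ← h2, heq]
    have hGssub : Gs ⊆ (Icc 1 (2*s+1-P)).powersetCard 2 := by
      intro eh heh
      rw [hGsDef, Finset.mem_image] at heh
      obtain ⟨e, he, heq⟩ := heh
      obtain ⟨a, b, hab, h1, h2, rfl⟩ := exists_pair_repr (hG (hGhiG he))
      have haP : P + 1 ≤ a := by
        have := hGhielem _ he a (by rw [mem_pair]; left; rfl)
        omega
      have hbs : b ≤ 2*s+1 := by
        have := (hGhirange _ he).1 (show b ∈ ({a,b} : Finset ℕ) by rw [mem_pair]; right; rfl)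
        rw [Finset.mem_Icc] at this
        omega
      rw [← heq, Finset.image_insert, Finset.image_singleton]
      exact pair_mem_pairs (by omega) (by omega) (by omega)
    have hCs : Closed Gs := by
      intro a b a' b' hab hlt ha1 ha hb hab'
      obtain ⟨hmem, ha1'⟩ := hGs_repr a b hlt hab
      have hG1 : ({a+P, b+P} : Finset ℕ) ∈ G := hGhiG hmem
      have hG2 : ({a'+P, b'+P} : Finset ℕ) ∈ G :=
        hC hG1 (by omega) (by omega) (by omega) (by omega) (by omega)
      have hGhi2 : ({a'+P, b'+P} : Finset ℕ) ∈ Ghi :=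
        (hpairhi a' b' hab').2 ⟨hG2, ha1⟩
      exact (hGs_mem a' b' hab').2 (Or.inl hGhi2)
    have hQs : (Icc 1 (q-P)).powersetCard 2 ⊆ Gs := by
      intro p hp
      obtain ⟨a, b, hab, h1, h2, rfl⟩ := exists_pair_repr hp
      have hG1 : ({a+P, b+P} : Finset ℕ) ∈ G :=
        hQ (pair_mem_pairs (by omega) (by omega) (by omega))
      have hGhi1 : ({a+P, b+P} : Finset ℕ) ∈ Ghi := (hpairhi a b hab).2 ⟨hG1, h1⟩
      exact (hGs_mem a b hab).2 (Or.inl hGhi1)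
    have hMhi : MatchingLE Ghi (s - P) :=
      matching_hi hP1 (by omega) hM hPG hC hGhiG hGhirange
    have hMs : MatchingLE Gs (s - P) := by
      intro M hMsub hMd
      have hinj : Function.Injective (fun x : ℕ => x + P) := fun x y h => Nat.add_right_cancel h
      set L := M.image (fun e => e.image (fun x => x + P)) with hL
      have hmemL : ∀ eh ∈ M, (eh.image (fun x => x + P)) ∈ Ghi := by
        intro eh heh
        have := hMsub heh
        rw [hGsDef, Finset.mem_image] at this
        obtain ⟨e, he, heq⟩ := this
        rw [← heq, lift_image (hGhielem e he)]
        exact he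
      have hLsub : L ⊆ Ghi := by
        intro x hx
        rw [hL, Finset.mem_image] at hx
        obtain ⟨eh, heh, rfl⟩ := hx
        exact hmemL eh heh
      have hLcard : L.card = M.card := by
        rw [hL]
        apply Finset.card_image_of_injOn
        exact (Finset.image_injective hinj).injOn
      have hLd : (L : Set (Finset ℕ)).PairwiseDisjoint id := by
        intro x hx y hy hxy
        rw [Finset.mem_coe, hL, Finset.mem_image] at hx hy
        obtain ⟨e1, he1, rfl⟩ := hx
        obtain ⟨e2, he2, rfl⟩ := hy
        have he12 : e1 ≠ e2 := fun h => hxy (by rw [h])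
        exact (Finset.disjoint_image hinj).2
          (hMd (Finset.mem_coe.2 he1) (Finset.mem_coe.2 he2) he12)
      have := hMhi L hLsub hLd
      omega
    have hIH := IH (s-P) (by omega) (q-P) (t-P) (2*s+1-P) Gs (by omega) (by omega) (by omega)
      hGssub hCs hMs hQs
    -- final arithmetic
    set r := t - P with hr
    set Q1 := q - P - 1 with hQ1
    set m := n - (2*s+2) with hm
    have eq1 : 2*(s-P)+1 = r+Q1+1 := by omega
    have eq2 : 2*(s-P) = r+Q1 := by omega
    have eq3 : q-P = Q1+1 := by omega
    have eq4 : q-P-1 = Q1 := by omega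
    have eq5 : t-P = r := by omega
    have eq6 : (2*s+1-P)-(q-P) = P+r := by omega
    have eq7 : n = r+Q1+2*P+2+m := by omega
    have eq8 : 2*s+1 = r+Q1+2*P+1 := by omega
    have eq9 : 2*s = r+Q1+2*P := by omega
    have eq10 : q = Q1+P+1 := by omega
    have eq11 : q-1 = Q1+P := by omega
    have eq12 : t = P+r := by omega
    have eq13 : n-q = P+r+m+1 := by omega
    rw [eq1, eq2, eq3, hGscard] at hIH
    have eq6' : 2*s+1-P-(Q1+1) = P+r := by omega
    rw [eq6'] at hIH
    rw [eq8, eq9, eq11, eq13, eq12, eq10, ← hsplit]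
    have hA : 2 * Glo.card + P*(P+1) ≤ 2*(P*(r+Q1+2*P+2+m)) := by rw [← eq7]; exact hloB
    exact arith_final P r Q1 m Glo.card Ghi.card hP1 hA hIH

lemma Icc_card (a : ℕ) : (Icc 1 a).card = a := by rw [Nat.card_Icc]; omega

lemma constructionA (s q n : ℕ) (hq1 : s + 1 ≤ q) (hq2 : q ≤ 2*s+1) (hn : 2*s+2 ≤ n) :
    ∃ G : Finset (Finset ℕ), G ⊆ (Icc 1 n).powersetCard 2 ∧ MatchingLE G s ∧
      HasClique n G 2 q ∧ G.card = (2*s+1).choose 2 := by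
  refine ⟨(Icc 1 (2*s+1)).powersetCard 2, ?_, ?_, ?_, ?_⟩
  · exact Finset.powersetCard_mono (Finset.Icc_subset_Icc le_rfl (by omega))
  · intro M hMsub hMd
    have hsum := sum_inter_card_le M (Icc 1 (2*s+1)) hMd
    have h2 : ∀ e ∈ M, (e ∩ Icc 1 (2*s+1)).card = 2 := by
      intro e he
      have := hMsub he
      rw [Finset.mem_powersetCard] at this
      rw [Finset.inter_eq_left.2 this.1, this.2]
    rw [Finset.sum_congr rfl h2, Finset.sum_const, Icc_card, smul_eq_mul] at hsum
    omega
  · refine ⟨Icc 1 q, Finset.Icc_subset_Icc le_rfl (by omega), Icc_card q, ?_⟩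
    exact Finset.powersetCard_mono (Finset.Icc_subset_Icc le_rfl (by omega))
  · rw [Finset.card_powersetCard, Icc_card]

lemma constructionB (s q n : ℕ) (hs : 1 ≤ s) (hq1 : s + 1 ≤ q) (hq2 : q ≤ 2*s+1)
    (hn : 2*s+2 ≤ n) :
    ∃ G : Finset (Finset ℕ), G ⊆ (Icc 1 n).powersetCard 2 ∧ MatchingLE G s ∧
      HasClique n G 2 q ∧ G.card = q.choose 2 + (2*s+1-q)*(n-q) := by
  classical
  set t := 2*s+1-q with ht
  have hts : t ≤ s := by omega
  have htq : t < q := by omega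
  set G2 := (Icc 1 q).powersetCard 2 ∪
    ((Icc 1 t ×ˢ Icc (q+1) n).image (fun p => ({p.1, p.2} : Finset ℕ))) with hG2
  have hmemB : ∀ e ∈ (Icc 1 t ×ˢ Icc (q+1) n).image (fun p => ({p.1, p.2} : Finset ℕ)),
      ∃ a x, 1 ≤ a ∧ a ≤ t ∧ q+1 ≤ x ∧ x ≤ n ∧ e = {a, x} := by
    intro e he
    rw [Finset.mem_image] at he
    obtain ⟨p, hp, rfl⟩ := he
    rw [Finset.mem_product, Finset.mem_Icc, Finset.mem_Icc] at hp
    exact ⟨p.1, p.2, hp.1.1, hp.1.2, hp.2.1, hp.2.2, rfl⟩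
  have hmem : ∀ e ∈ G2, (e ⊆ Icc 1 q ∧ e.card = 2) ∨
      (∃ a x, 1 ≤ a ∧ a ≤ t ∧ q+1 ≤ x ∧ x ≤ n ∧ e = {a, x}) := by
    intro e he
    rw [hG2, Finset.mem_union] at he
    rcases he with he | he
    · rw [Finset.mem_powersetCard] at he
      exact Or.inl he
    · exact Or.inr (hmemB e he)
  refine ⟨G2, ?_, ?_, ?_, ?_⟩
  · intro e he
    rcases hmem e he with ⟨h1, h2⟩ | ⟨a, x, h1, h2, h3, h4, rfl⟩
    · rw [Finset.mem_powersetCard]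
      exact ⟨h1.trans (Finset.Icc_subset_Icc le_rfl (by omega)), h2⟩
    · exact pair_mem_pairs h1 (by omega) h4
  · intro M hMsub hMd
    have hsA := sum_inter_card_le M (Icc 1 q) hMd
    have hsB := sum_inter_card_le M (Icc 1 t) hMd
    have h2 : ∀ e ∈ M, 2 ≤ (e ∩ Icc 1 q).card + (e ∩ Icc 1 t).card := by
      intro e he
      rcases hmem e (hMsub he) with ⟨h1, h2⟩ | ⟨a, x, h1, h2, h3, h4, rfl⟩
      · rw [Finset.inter_eq_left.2 h1, h2]
        omega
      · have hA : 1 ≤ (({a, x} : Finset ℕ) ∩ Icc 1 q).card := by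
          apply Finset.card_pos.2
          exact ⟨a, Finset.mem_inter.2 ⟨by rw [mem_pair]; left; rfl,
            by rw [Finset.mem_Icc]; omega⟩⟩
        have hB : 1 ≤ (({a, x} : Finset ℕ) ∩ Icc 1 t).card := by
          apply Finset.card_pos.2
          exact ⟨a, Finset.mem_inter.2 ⟨by rw [mem_pair]; left; rfl,
            by rw [Finset.mem_Icc]; omega⟩⟩
        omega
    have h3 : 2 * M.card ≤ ∑ e ∈ M, ((e ∩ Icc 1 q).card + (e ∩ Icc 1 t).card) := by
      rw [two_mul]
      calc M.card + M.card = ∑ _e ∈ M, 2 := by rw [Finset.sum_const, smul_eq_mul]; ring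
        _ ≤ _ := Finset.sum_le_sum h2
    rw [Finset.sum_add_distrib] at h3
    rw [Icc_card] at hsA hsB
    omega
  · refine ⟨Icc 1 q, Finset.Icc_subset_Icc le_rfl (by omega), Icc_card q, ?_⟩
    intro p hp
    rw [hG2, Finset.mem_union]
    exact Or.inl hp
  · rw [hG2, Finset.card_union_of_disjoint, Finset.card_powersetCard, Icc_card,
      Finset.card_image_of_injOn, Finset.card_product, Nat.card_Icc, Nat.card_Icc]
    · have h1 : t + 1 - 1 = t := by omega
      have h2 : n + 1 - (q + 1) = n - q := by omega
      rw [h1, h2]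
    · intro p1 hp1 p2 hp2 heq
      simp only at heq
      rw [Finset.mem_coe, Finset.mem_product, Finset.mem_Icc, Finset.mem_Icc] at hp1 hp2
      have ha : p1.1 ∈ ({p2.1, p2.2} : Finset ℕ) := by
        rw [← heq, mem_pair]; left; rfl
      have hx : p1.2 ∈ ({p2.1, p2.2} : Finset ℕ) := by
        rw [← heq, mem_pair]; right; rfl
      rw [mem_pair] at ha hx
      have : p1.1 = p2.1 ∧ p1.2 = p2.2 := by omega
      exact Prod.ext this.1 this.2
    · rw [Finset.disjoint_left]
      intro e he he'
      rw [Finset.mem_powersetCard] at he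
      obtain ⟨a, x, h1, h2, h3, h4, rfl⟩ := hmemB e he'
      have := he.1 (show x ∈ ({a, x} : Finset ℕ) by rw [mem_pair]; right; rfl)
      rw [Finset.mem_Icc] at this
      omega

end EG

theorem stmt_15 (n s q : ℕ) (hs : 2 ≤ s) (hq1 : s + 1 ≤ q) (hq2 : q ≤ 2 * s + 1)
    (hn : 2 * s + 2 ≤ n) :
    IsGreatest
      {m : ℕ | ∃ G : Finset (Finset ℕ),
        G ⊆ (Finset.Icc 1 n).powersetCard 2 ∧ MatchingLE G s ∧
          HasClique n G 2 q ∧ G.card = m}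
      (max ((2 * s + 1).choose 2) (q.choose 2 + (2 * s + 1 - q) * (n - q))) := by
  constructor
  · rcases le_total (q.choose 2 + (2*s+1-q)*(n-q)) ((2*s+1).choose 2) with h | h
    · obtain ⟨G, h1, h2, h3, h4⟩ := EG.constructionA s q n hq1 hq2 hn
      exact ⟨G, h1, h2, h3, by rw [h4, max_eq_left h]⟩
    · obtain ⟨G, h1, h2, h3, h4⟩ := EG.constructionB s q n (by omega) hq1 hq2 hn
      exact ⟨G, h1, h2, h3, by rw [h4, max_eq_right h]⟩
  · intro x hx
    obtain ⟨G, hG, hM, hQc, rfl⟩ := hx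
    obtain ⟨H, hHsub, hHM, hHQ, hHcard, hHst⟩ :=
      EG.exists_stable n s q (EG.wt G) G le_rfl hG hM hQc
    have hC := hHst.closed
    have hQn := EG.clique_normalize hC hHQ
    have hsut := EG.SUT s q (2*s+1-q) n H (by omega) hq1 hn hHsub hC hHM hQn
    have e1 := EG.choose_two_double (2*s+1)
    have e1' : 2*s+1-1 = 2*s := by omega
    rw [e1'] at e1
    have e2 := EG.choose_two_double q
    have hcase : G.card ≤ (2*s+1).choose 2 ∨ G.card ≤ q.choose 2 + (2*s+1-q)*(n-q) := by
      rcases max_cases ((2*s+1)*(2*s)) (q*(q-1) + 2*((2*s+1-q)*(n-q))) with ⟨hmx, hc⟩ | ⟨hmx, hc⟩ <;>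
        rw [hmx] at hsut
      · left; omega
      · right; omega
    rcases hcase with h | h
    · exact le_trans h (le_max_left _ _)
    · exact le_trans h (le_max_right _ _)
end

section
/- Let n_2 ≥ 4k·n_1 and 1 ≤ l < l' ≤ k-1 with l, l' < k and l, l' ≤ n_1, k - l, k - l' ≤ n_2. Then 1/(l!·(n_1-l)!·(k-l)!·(n_2-k+l)!) > 1/(l'!·(n_1-l')!·(k-l')!·(n_2-k+l')!). -/
private def g16 (n1 n2 k i : ℕ) : ℕ :=
  i.factorial * (n1 - i).factorial * (k - i).factorial * (n2 + i - k).factorial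

private lemma key16 (n1 n2 k i : ℕ) (hbig : 4 * k * n1 ≤ n2)
    (hi1 : 1 ≤ i) (hik : i + 1 < k) (hin1 : i + 1 ≤ n1) :
    (n1 - i) * (k - i) < (i + 1) * (n2 + (i + 1) - k) := by
  have hk2 : 2 ≤ k := by omega
  have hn1 : 1 ≤ n1 := by omega
  have hkn2 : k ≤ n2 := by nlinarith
  have h1 : (n1 - i) * (k - i) ≤ n1 * k := Nat.mul_le_mul (by omega) (by omega)
  have h2 : n1 * k < n2 + (i + 1) - k := by
    have : n1 * k + k ≤ 4 * k * n1 := by nlinarith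
    omega
  calc (n1 - i) * (k - i) ≤ n1 * k := h1
    _ < n2 + (i + 1) - k := h2
    _ ≤ (i + 1) * (n2 + (i + 1) - k) := Nat.le_mul_of_pos_left _ (by omega)

private lemma gstep16 (n1 n2 k i : ℕ) (hbig : 4 * k * n1 ≤ n2)
    (hi1 : 1 ≤ i) (hik : i + 1 < k) (hin1 : i + 1 ≤ n1) :
    g16 n1 n2 k i < g16 n1 n2 k (i + 1) := by
  have hkn2 : k ≤ n2 := by nlinarith
  unfold g16
  have e1 : (n1 - i).factorial = (n1 - i) * (n1 - (i+1)).factorial := by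
    rw [show n1 - i = (n1 - (i+1)) + 1 by omega, Nat.factorial_succ]
  have e2 : (k - i).factorial = (k - i) * (k - (i+1)).factorial := by
    rw [show k - i = (k - (i+1)) + 1 by omega, Nat.factorial_succ]
  have e3 : (n2 + (i+1) - k).factorial = (n2 + (i+1) - k) * (n2 + i - k).factorial := by
    rw [show n2 + (i+1) - k = (n2 + i - k) + 1 by omega, Nat.factorial_succ]
  have e4 : (i+1).factorial = (i+1) * i.factorial := Nat.factorial_succ i
  rw [e1, e2, e3, e4]
  have hkey := key16 n1 n2 k i hbig hi1 hik hin1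
  have hpos : 0 < i.factorial * (n1 - (i+1)).factorial * (k - (i+1)).factorial * (n2 + i - k).factorial :=
    by positivity
  calc i.factorial * ((n1 - i) * (n1 - (i+1)).factorial) * ((k - i) * (k - (i+1)).factorial) * (n2 + i - k).factorial
      = ((n1 - i) * (k - i)) * (i.factorial * (n1 - (i+1)).factorial * (k - (i+1)).factorial * (n2 + i - k).factorial) := by ring
    _ < ((i+1) * (n2 + (i+1) - k)) * (i.factorial * (n1 - (i+1)).factorial * (k - (i+1)).factorial * (n2 + i - k).factorial) :=
        (Nat.mul_lt_mul_right hpos).mpr hkey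
    _ = (i+1) * i.factorial * (n1 - (i+1)).factorial * (k - (i+1)).factorial * ((n2 + (i+1) - k) * (n2 + i - k).factorial) := by ring

private lemma gmono16 (n1 n2 k l : ℕ) (hbig : 4 * k * n1 ≤ n2) (hl1 : 1 ≤ l) :
    ∀ l', l < l' → l' < k → l' ≤ n1 → g16 n1 n2 k l < g16 n1 n2 k l' := by
  intro l'
  induction l' with
  | zero => omega
  | succ j ih =>
    intro h1 h2 h3
    rcases Nat.lt_or_ge l j with h | h
    · exact (ih h (by omega) (by omega)).trans
        (gstep16 n1 n2 k j hbig (by omega) (by omega) h3)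
    · have : l = j := by omega
      subst this
      exact gstep16 n1 n2 k l hbig hl1 (by omega) h3

theorem stmt_16 (n1 n2 k l l' : ℕ)
    (hbig : 4 * k * n1 ≤ n2)
    (hl1 : 1 ≤ l) (hll' : l < l') (hl'k : l' ≤ k - 1)
    (hlk : l < k) (hl'k2 : l' < k) (hln1 : l ≤ n1) (hl'n1 : l' ≤ n1)
    (hkl : k - l ≤ n2) (hkl' : k - l' ≤ n2) :
    (1 : ℝ) / ((Nat.factorial l : ℝ) * (Nat.factorial (n1 - l)) *
        (Nat.factorial (k - l)) * (Nat.factorial (n2 + l - k))) >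
      1 / ((Nat.factorial l' : ℝ) * (Nat.factorial (n1 - l')) *
        (Nat.factorial (k - l')) * (Nat.factorial (n2 + l' - k))) := by
  have h := gmono16 n1 n2 k l hbig hl1 l' hll' hl'k2 hl'n1
  unfold g16 at h
  have hR : ((Nat.factorial l : ℝ) * (Nat.factorial (n1 - l)) *
      (Nat.factorial (k - l)) * (Nat.factorial (n2 + l - k))) <
      ((Nat.factorial l' : ℝ) * (Nat.factorial (n1 - l')) *
      (Nat.factorial (k - l')) * (Nat.factorial (n2 + l' - k))) := by
    exact_mod_cast h
  have hpos : (0:ℝ) < (Nat.factorial l : ℝ) * (Nat.factorial (n1 - l)) *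
      (Nat.factorial (k - l)) * (Nat.factorial (n2 + l - k)) := by positivity
  exact one_div_lt_one_div_of_lt hpos hR
end
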